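/- arXiv:math/0305430 — 6 statements merged into one kernel-verified Lean document; each statement's English description precedes it below -/
import Mathlib

section
/- Evaluating the standard polynomial s_{2n-1} at the staircase sequence of matrix units e_{11}, e_{12}, e_{22}, e_{23}, ..., e_{(n-1)(n-1)}, e_{(n-1)n}, e_{nn} in M_n(F) yields the matrix unit e_{1n}. -/
open Matrix

/-- The standard polynomial `s_d` evaluated at `x : Fin d → R`. -/
noncomputable def stdPoly {R : Type*} [Ring R] (d : ℕ) (x : Fin d → R) : R :=
  ∑ σ : Equiv.Perm (Fin d), ((Equiv.Perm.sign σ : ℤˣ) : ℤ) • (List.ofFn fun i => x (σ i)).prod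

/-- The staircase sequence `e₁₁, e₁₂, e₂₂, e₂₃, …, e₍ₙ₋₁₎ₙ, eₙₙ` of `2n-1` matrix units. -/
noncomputable def staircase (F : Type*) [Field F] (n : ℕ) (hn : 0 < n)
    (k : Fin (2 * n - 1)) : Matrix (Fin n) (Fin n) F :=
  Matrix.single
    ⟨(k : ℕ) / 2, by have := k.isLt; omega⟩
    ⟨((k : ℕ) + 1) / 2, by have := k.isLt; omega⟩ 1

open Classical in
lemma key_prod {F : Type*} [Field F] {N : ℕ} (m : ℕ) (f : Fin (m + 1) → Fin N × Fin N) :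
    (List.ofFn fun i => single (f i).1 (f i).2 (1 : F)).prod =
      if ∀ i : Fin m, (f i.castSucc).2 = (f i.succ).1 then
        single (f 0).1 (f (Fin.last m)).2 1
      else 0 := by
  induction m with
  | zero =>
    simp
  | succ m ih =>
    rw [List.ofFn_succ, List.prod_cons]
    have ih' := ih (fun i => f i.succ)
    rw [ih']
    by_cases hC : ∀ i : Fin m, (f i.castSucc.succ).2 = (f i.succ.succ).1
    · rw [if_pos hC]
      by_cases h0 : (f 0).2 = (f (0 : Fin (m+1)).succ).1
      · rw [h0, single_mul_single_same, one_mul]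
        rw [if_pos, Fin.succ_last]
        intro i
        refine Fin.cases ?_ ?_ i
        · simpa using h0
        · intro j
          have := hC j
          rwa [Fin.succ_castSucc] at this
      · rw [single_mul_single_of_ne (h := h0), if_neg]
        intro h
        exact h0 (by simpa using h 0)
    · rw [if_neg hC, mul_zero, if_neg]
      intro h
      apply hC
      intro i
      have := h i.succ
      rwa [← Fin.succ_castSucc] at this

/-- Evaluating `s_{2n-1}` at the staircase sequence yields the matrix unit `e_{1n}`. -/
theorem stdPoly_staircase (F : Type*) [Field F] (n : ℕ) (hn : 0 < n) :
    stdPoly (2 * n - 1) (staircase F n hn) =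
      Matrix.single ⟨0, hn⟩ ⟨n - 1, by omega⟩ 1 := by
  obtain ⟨m, rfl⟩ : ∃ m, n = m + 1 := ⟨n - 1, by omega⟩
  rw [stdPoly]
  have hprod : ∀ σ : Equiv.Perm (Fin (2 * (m + 1) - 1)),
      (List.ofFn fun i => staircase F (m + 1) hn (σ i)).prod =
      if ∀ i : Fin (2 * m),
          ((fun i : Fin (2 * m + 1) =>
            ((⟨(σ i : ℕ) / 2, by have := (σ i).isLt; omega⟩ : Fin (m + 1)),
             (⟨((σ i : ℕ) + 1) / 2, by have := (σ i).isLt; omega⟩ : Fin (m + 1)))) i.castSucc).2 =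
          ((fun i : Fin (2 * m + 1) =>
            ((⟨(σ i : ℕ) / 2, by have := (σ i).isLt; omega⟩ : Fin (m + 1)),
             (⟨((σ i : ℕ) + 1) / 2, by have := (σ i).isLt; omega⟩ : Fin (m + 1)))) i.succ).1
      then single (⟨(σ (0 : Fin (2 * m + 1)) : ℕ) / 2, by have := (σ (0 : Fin (2 * m + 1))).isLt; omega⟩ : Fin (m + 1))
            (⟨((σ (Fin.last (2 * m)) : ℕ) + 1) / 2,
              by have := (σ (Fin.last (2*m))).isLt; omega⟩ : Fin (m + 1)) 1
      else 0 := by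
    intro σ
    exact key_prod (F := F) (2 * m) (fun i : Fin (2 * m + 1) =>
      (⟨(σ i : ℕ) / 2, by have := (σ i).isLt; omega⟩,
       ⟨((σ i : ℕ) + 1) / 2, by have := (σ i).isLt; omega⟩))
  rw [Finset.sum_eq_single (1 : Equiv.Perm (Fin (2 * (m + 1) - 1)))]
  · rw [hprod, if_pos]
    · rw [Equiv.Perm.sign_one]
      simp only [Units.val_one, one_smul]
      exact congrArg₂ (fun a b => single a b (1 : F))
        (Fin.ext (by simp [Equiv.Perm.one_apply]))
        (Fin.ext (by simp [Equiv.Perm.one_apply, Fin.last]; omega))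
    · intro i
      apply Fin.ext
      simp [Equiv.Perm.one_apply]
  · intro σ _ hσ
    rw [hprod, if_neg]
    · simp
    · intro hC
      apply hσ
      have hdiv : ∀ i : Fin (2 * m),
          ((σ i.castSucc : ℕ) + 1) / 2 = (σ i.succ : ℕ) / 2 :=
        fun i => congrArg Fin.val (hC i)
      have hlt : ∀ k (hk : k + 1 < 2 * (m + 1) - 1),
          (σ ⟨k, by omega⟩ : ℕ) < (σ ⟨k + 1, hk⟩ : ℕ) := by
        intro k hk
        have h := hdiv ⟨k, by omega⟩
        have hne : (σ (⟨k, by omega⟩ : Fin (2*m)).castSucc : ℕ) ≠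
            (σ (⟨k, by omega⟩ : Fin (2*m)).succ : ℕ) := by
          intro hEq
          have h2 := σ.injective (Fin.ext hEq)
          have := congrArg Fin.val h2
          simp [Fin.castSucc, Fin.succ] at this
        have e1 : (σ (⟨k, by omega⟩ : Fin (2*m)).castSucc : ℕ) = (σ ⟨k, by omega⟩ : ℕ) := rfl
        have e2 : (σ (⟨k, by omega⟩ : Fin (2*m)).succ : ℕ) = (σ ⟨k + 1, hk⟩ : ℕ) := rfl
        rw [e1, e2] at h hne
        omega
      have h1 : ∀ k (hk : k < 2 * (m + 1) - 1), k ≤ (σ ⟨k, hk⟩ : ℕ) := by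
        intro k
        induction k with
        | zero => intro hk; omega
        | succ k ih =>
          intro hk
          have h := hlt k hk
          have := ih (by omega)
          omega
      have h2 : ∀ j k (hk : k < 2 * (m + 1) - 1), k + j = 2 * m → (σ ⟨k, hk⟩ : ℕ) ≤ k := by
        intro j
        induction j with
        | zero =>
          intro k hk hkj
          have := (σ ⟨k, hk⟩).isLt
          omega
        | succ j ih =>
          intro k hk hkj
          have h := hlt k (by omega)
          have := ih (k + 1) (by omega) (by omega)
          omega
      apply Equiv.ext
      intro x
      apply Fin.ext
      have e3 : σ x = σ ⟨(x : ℕ), x.isLt⟩ := rfl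
      have := h1 (x : ℕ) x.isLt
      have := h2 (2 * m - (x : ℕ)) (x : ℕ) x.isLt (by have := x.isLt; omega)
      rw [e3]
      simp only [Equiv.Perm.one_apply]
      omega
  · intro h
    exact absurd (Finset.mem_univ _) h
end

section
/- The full algebra M_n(F) of n×n matrices over a field F does not satisfy any multilinear polynomial identity of degree less than 2n; in particular s_{2n-1} is not an identity of M_n(F). -/
open Matrix

/-- Product of a chain of standard basis matrices. -/
lemma chainProd {F : Type*} [Field F] {n : ℕ} :
    ∀ (m : ℕ) (g : Fin (m + 1) → Fin n × Fin n),
    (List.ofFn fun i => Matrix.single (g i).1 (g i).2 (1 : F)).prod =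
      if ∀ i : Fin m, (g i.castSucc).2 = (g i.succ).1
      then Matrix.single (g 0).1 (g (Fin.last m)).2 1 else 0 := by
  intro m
  induction m with
  | zero =>
    intro g
    simp [List.ofFn_succ]
  | succ m ih =>
    intro g
    rw [List.ofFn_succ, List.prod_cons, ih (fun i => g i.succ)]
    have hsplit : (∀ i : Fin (m + 1), (g i.castSucc).2 = (g i.succ).1) ↔
        ((g 0).2 = (g 1).1 ∧ ∀ i : Fin m, (g i.succ.castSucc).2 = (g i.succ.succ).1) := by
      constructor
      · intro h
        refine ⟨h 0, fun i => ?_⟩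
        exact h i.succ
      · rintro ⟨h0, h⟩ i
        induction i using Fin.cases with
        | zero => exact h0
        | succ j => exact h j
    have h01 : ((0 : Fin (m + 1)).succ : Fin (m + 2)) = 1 := rfl
    by_cases h2 : ∀ i : Fin m, (g (i.castSucc).succ).2 = (g i.succ.succ).1
    · rw [if_pos h2]
      by_cases h1 : (g 0).2 = (g 1).1
      · rw [if_pos (hsplit.mpr ⟨h1, fun i => by rw [← Fin.succ_castSucc]; exact h2 i⟩)]
        have hh : (g ((0 : Fin (m+1)).succ)).1 = (g 0).2 := by rw [h01, h1]
        rw [hh, Matrix.single_mul_single_same, one_mul]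
        rfl
      · rw [if_neg (fun h => h1 (hsplit.mp h).1)]
        apply Matrix.single_mul_single_of_ne
        rw [h01]
        exact h1
    · rw [if_neg h2, mul_zero, if_neg]
      rw [hsplit]
      rintro ⟨-, h⟩
      exact h2 fun i => by rw [Fin.succ_castSucc]; exact h i

/-- If a permutation of the staircase positions still chains up, it is the identity. -/
lemma staircase_unique (m : ℕ) (τ : Equiv.Perm (Fin m))
    (h : ∀ a b : Fin m, (b : ℕ) = (a : ℕ) + 1 →
      ((τ a : ℕ) + 1) / 2 = (τ b : ℕ) / 2) :
    τ = 1 := by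
  have inj : ∀ a b : Fin m, (τ a : ℕ) = (τ b : ℕ) → (a : ℕ) = (b : ℕ) :=
    fun a b hab => congrArg Fin.val (τ.injective (Fin.ext hab))
  suffices H : ∀ (i : ℕ) (hi : i < m), (τ ⟨i, hi⟩ : ℕ) = i by
    ext i
    exact H i.1 i.2
  intro i
  induction i using Nat.strong_induction_on with
  | _ i IH =>
    intro hi
    -- τ maps indices ≥ i to values ≥ i
    have hge : ∀ (j : ℕ) (hj : j < m), i ≤ j → i ≤ (τ ⟨j, hj⟩ : ℕ) := by
      intro j hj hij
      by_contra hlt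
      push_neg at hlt
      have h1 : (τ ⟨(τ ⟨j, hj⟩ : ℕ), by omega⟩ : ℕ) = (τ ⟨j, hj⟩ : ℕ) := IH _ hlt _
      have := inj ⟨(τ ⟨j, hj⟩ : ℕ), by omega⟩ ⟨j, hj⟩ h1
      simp only [Fin.val_mk] at this
      omega
    rcases Nat.even_or_odd i with he | ho
    · -- even case
      obtain ⟨k, hk⟩ := he
      by_contra hne
      set i' : Fin m := τ.symm ⟨i, hi⟩ with hi'def
      have hi' : τ i' = ⟨i, hi⟩ := by simp [hi'def]
      have hvi' : (τ i' : ℕ) = i := by rw [hi']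
      have hne' : (i' : ℕ) ≠ i := by
        rintro hv
        apply hne
        rw [show (⟨i, hi⟩ : Fin m) = i' from Fin.ext hv.symm, hvi']
      have hgt : i < (i' : ℕ) := by
        rcases lt_or_gt_of_ne hne' with hlt | hgt
        · exfalso
          have h1 := IH _ hlt i'.2
          rw [show (⟨(i' : ℕ), i'.2⟩ : Fin m) = i' from Fin.ext rfl, hvi'] at h1
          exact hne' h1.symm
        · exact hgt
      have pf1 : (i' : ℕ) - 1 < m := by omega
      have hc := h ⟨(i' : ℕ) - 1, pf1⟩ i' (by simp only [Fin.val_mk]; omega)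
      rw [hvi'] at hc
      -- hc : (τ ⟨i'-1, _⟩ + 1)/2 = i/2
      have hv2 : (τ ⟨(i' : ℕ) - 1, pf1⟩ : ℕ) = i ∨
          (1 ≤ i ∧ (τ ⟨(i' : ℕ) - 1, pf1⟩ : ℕ) = i - 1) := by omega
      rcases hv2 with hvi | ⟨hi1, hvi⟩
      · -- value i appears twice, contradicts injectivity
        have := inj ⟨(i' : ℕ) - 1, pf1⟩ i' (by rw [hvi, hvi'])
        simp only [Fin.val_mk] at this
        omega
      · -- value i - 1 appears twice
        have hIH := IH (i - 1) (by omega) (by omega)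
        have := inj ⟨(i' : ℕ) - 1, pf1⟩ ⟨i - 1, by omega⟩ (hvi.trans hIH.symm)
        simp only [Fin.val_mk] at this
        omega
    · -- odd case
      obtain ⟨k, hk⟩ := ho
      have pf2 : i - 1 < m := by omega
      have hc := h ⟨i - 1, pf2⟩ ⟨i, hi⟩ (by simp only [Fin.val_mk]; omega)
      rw [IH (i - 1) (by omega) pf2] at hc
      have := hge i hi le_rfl
      omega

lemma main_aux (F : Type*) [Field F] (n : ℕ) (hn : 0 < n) (m : ℕ) (hm : m < 2 * n)
    (c : Equiv.Perm (Fin m) → F) (hc : c ≠ 0) :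
    ∃ x : Fin m → Matrix (Fin n) (Fin n) F,
      ∑ σ : Equiv.Perm (Fin m), c σ • (List.ofFn fun i => x (σ i)).prod ≠ 0 := by
  obtain ⟨σ₀, hσ₀⟩ := Function.ne_iff.mp hc
  rw [Pi.zero_apply] at hσ₀
  match m, hm, c, σ₀, hσ₀ with
  | 0, hm, c, σ₀, hσ₀ =>
    refine ⟨fun j => 0, ?_⟩
    have : ∀ σ : Equiv.Perm (Fin 0), σ = σ₀ := fun σ => Subsingleton.elim _ _
    rw [Fintype.sum_eq_single σ₀ (fun σ hσ => absurd (this σ) hσ)]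
    simp only [List.ofFn_zero, List.prod_nil]
    intro H
    have := congrFun (congrFun H ⟨0, hn⟩) ⟨0, hn⟩
    simp [Matrix.one_apply] at this
    exact hσ₀ this
  | (M + 1), hm, c, σ₀, hσ₀ =>
    set f : Fin (M + 2) → Fin n := fun j => ⟨j.1 / 2, by omega⟩ with hf
    set g : Fin (M + 1) → Fin n × Fin n := fun i => (f i.castSucc, f i.succ) with hg
    refine ⟨fun j => Matrix.single (g (σ₀⁻¹ j)).1 (g (σ₀⁻¹ j)).2 1, ?_⟩
    have key : ∀ σ : Equiv.Perm (Fin (M + 1)),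
        (List.ofFn fun i => Matrix.single (g (σ₀⁻¹ (σ i))).1 (g (σ₀⁻¹ (σ i))).2 (1 : F)).prod
          = if σ = σ₀ then Matrix.single (f 0) (f (Fin.last (M + 1))) 1 else 0 := by
      intro σ
      rw [chainProd M (fun i => g (σ₀⁻¹ (σ i)))]
      set τ : Equiv.Perm (Fin (M + 1)) := σ₀⁻¹ * σ with hτ
      have happ : ∀ i, σ₀⁻¹ (σ i) = τ i := fun i => rfl
      by_cases hts : σ = σ₀
      · subst hts
        have hτ1 : τ = 1 := by simp [hτ]
        rw [if_pos, if_pos rfl]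
        · simp only [happ, hτ1]
          rfl
        · intro i
          simp only [happ, hτ1, Equiv.Perm.coe_one, id_eq, hg]
          apply Fin.ext
          simp only [hf, Fin.coe_castSucc, Fin.val_succ]
      · rw [if_neg, if_neg hts]
        intro hchain
        apply hts
        have hτ1 : τ = 1 := by
          apply staircase_unique
          intro a b hab
          have hb2 : (a : ℕ) < M := by omega
          have hi : a = (⟨(a : ℕ), hb2⟩ : Fin M).castSucc := Fin.ext rfl
          have hj : b = (⟨(a : ℕ), hb2⟩ : Fin M).succ := Fin.ext (by simp [hab])
          have hch := hchain ⟨(a : ℕ), hb2⟩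
          simp only [happ] at hch
          rw [congrArg τ hi, congrArg τ hj]
          simpa [hg, hf] using congrArg Fin.val hch
        exact (inv_mul_eq_one.mp (hτ.symm.trans hτ1)).symm
    calc ∑ σ : Equiv.Perm (Fin (M + 1)), c σ •
            (List.ofFn fun i => Matrix.single (g (σ₀⁻¹ (σ i))).1 (g (σ₀⁻¹ (σ i))).2 (1:F)).prod
        = ∑ σ : Equiv.Perm (Fin (M + 1)),
            (if σ = σ₀ then c σ • Matrix.single (f 0) (f (Fin.last (M + 1))) 1 else 0) := by
          refine Finset.sum_congr rfl fun σ _ => ?_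
          rw [key σ]
          split <;> simp
      _ = c σ₀ • Matrix.single (f 0) (f (Fin.last (M + 1))) 1 := by
          rw [Finset.sum_ite_eq' Finset.univ σ₀
            (fun σ => c σ • Matrix.single (f 0) (f (Fin.last (M + 1))) (1:F))]
          simp
      _ ≠ 0 := by
          intro H
          have := congrFun (congrFun H (f 0)) (f (Fin.last (M + 1)))
          rw [Matrix.smul_apply, Matrix.single_apply_same] at this
          simp at this
          exact hσ₀ this

/-- `M_n(F)` satisfies no nonzero multilinear polynomial identity of degree `m < 2n`;
in particular the standard polynomial `s_{2n-1}` is not an identity of `M_n(F)`. -/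
theorem Mn_no_identity_lt_two_n (F : Type*) [Field F] (n : ℕ) (hn : 0 < n) :
    (∀ (m : ℕ), m < 2 * n → ∀ c : Equiv.Perm (Fin m) → F, c ≠ 0 →
      ∃ x : Fin m → Matrix (Fin n) (Fin n) F,
        ∑ σ : Equiv.Perm (Fin m), c σ • (List.ofFn fun i => x (σ i)).prod ≠ 0) ∧
    ∃ x : Fin (2 * n - 1) → Matrix (Fin n) (Fin n) F, stdPoly (2 * n - 1) x ≠ 0 := by
  constructor
  · exact fun m hm c hc => main_aux F n hn m hm c hc
  · have hc : (fun σ : Equiv.Perm (Fin (2 * n - 1)) =>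
        (((Equiv.Perm.sign σ : ℤˣ) : ℤ) : F)) ≠ 0 := by
      intro H
      have := congrFun H 1
      simp at this
    obtain ⟨x, hx⟩ := main_aux F n hn (2 * n - 1) (by omega) _ hc
    refine ⟨x, fun H => hx ?_⟩
    rw [← H]
    unfold stdPoly
    refine Finset.sum_congr rfl fun σ _ => ?_
    rw [Int.cast_smul_eq_zsmul]
end

section
/- Let A be a subalgebra of the block upper triangular algebra E_{(ℓ,m)}(F) such that the image A_ℓ of A under projection to M_ℓ(F) satisfies the standard identity s_q, and the image A_m under projection to M_m(F) satisfies s_r. Then A satisfies the standard identity s_{q+r}. -/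
open Matrix

/-- Membership in `E_{(ℓ,m)}(F)`: the lower-left block vanishes. -/
def memE {F : Type*} [Field F] {ℓ m : ℕ}
    (M : Matrix (Fin ℓ ⊕ Fin m) (Fin ℓ ⊕ Fin m) F) : Prop :=
  ∀ (i : Fin m) (j : Fin ℓ), M (Sum.inr i) (Sum.inl j) = 0

/-- The projection `π_ℓ` onto the upper-left diagonal block. -/
def piL {F : Type*} [Field F] {ℓ m : ℕ}
    (M : Matrix (Fin ℓ ⊕ Fin m) (Fin ℓ ⊕ Fin m) F) : Matrix (Fin ℓ) (Fin ℓ) F :=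
  fun i j => M (Sum.inl i) (Sum.inl j)

/-- The projection `π_m` onto the lower-right diagonal block. -/
def piM {F : Type*} [Field F] {ℓ m : ℕ}
    (M : Matrix (Fin ℓ ⊕ Fin m) (Fin ℓ ⊕ Fin m) F) : Matrix (Fin m) (Fin m) F :=
  fun i j => M (Sum.inr i) (Sum.inr j)

section Aux

variable {F : Type*} [Field F] {ℓ m : ℕ}

private lemma memE_one : memE (1 : Matrix (Fin ℓ ⊕ Fin m) (Fin ℓ ⊕ Fin m) F) := by
  intro i j
  simp [memE, Matrix.one_apply]

private lemma memE_mul {a b : Matrix (Fin ℓ ⊕ Fin m) (Fin ℓ ⊕ Fin m) F}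
    (ha : memE a) (hb : memE b) : memE (a * b) := by
  intro i j
  simp [Matrix.mul_apply, Fintype.sum_sum_type, ha i, hb _ j]

private lemma piL_mul {a b : Matrix (Fin ℓ ⊕ Fin m) (Fin ℓ ⊕ Fin m) F}
    (hb : memE b) : piL (a * b) = piL a * piL b := by
  ext i j
  simp [piL, Matrix.mul_apply, Fintype.sum_sum_type, hb _ j]

private lemma piM_mul {a b : Matrix (Fin ℓ ⊕ Fin m) (Fin ℓ ⊕ Fin m) F}
    (ha : memE a) : piM (a * b) = piM a * piM b := by
  ext i j
  simp [piM, Matrix.mul_apply, Fintype.sum_sum_type, ha i]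

private lemma mul_eq_zero_blocks {a b : Matrix (Fin ℓ ⊕ Fin m) (Fin ℓ ⊕ Fin m) F}
    (ha : memE a) (hb : memE b) (h1 : piL a = 0) (h2 : piM b = 0) : a * b = 0 := by
  have h1' : ∀ i j, a (Sum.inl i) (Sum.inl j) = 0 := fun i j => by
    simpa [piL] using congrFun (congrFun h1 i) j
  have h2' : ∀ i j, b (Sum.inr i) (Sum.inr j) = 0 := fun i j => by
    simpa [piM] using congrFun (congrFun h2 i) j
  have ha' : ∀ i j, a (Sum.inr i) (Sum.inl j) = 0 := ha
  have hb' : ∀ i j, b (Sum.inr i) (Sum.inl j) = 0 := hb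
  ext i j
  cases i <;> cases j <;>
    simp [Matrix.mul_apply, Fintype.sum_sum_type, ha', hb', h1', h2']

private lemma memE_listProd {l : List (Matrix (Fin ℓ ⊕ Fin m) (Fin ℓ ⊕ Fin m) F)}
    (h : ∀ a ∈ l, memE a) : memE l.prod := by
  induction l with
  | nil => simpa using memE_one
  | cons a l ih =>
    rw [List.prod_cons]
    exact memE_mul (h a (by simp)) (ih fun x hx => h x (by simp [hx]))

private lemma piL_listProd {l : List (Matrix (Fin ℓ ⊕ Fin m) (Fin ℓ ⊕ Fin m) F)}
    (h : ∀ a ∈ l, memE a) : piL l.prod = (l.map piL).prod := by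
  induction l with
  | nil =>
    ext i j
    simp [piL, Matrix.one_apply]
  | cons a l ih =>
    rw [List.prod_cons, List.map_cons, List.prod_cons,
      piL_mul (memE_listProd fun x hx => h x (by simp [hx])),
      ih fun x hx => h x (by simp [hx])]

private lemma piM_listProd {l : List (Matrix (Fin ℓ ⊕ Fin m) (Fin ℓ ⊕ Fin m) F)}
    (h : ∀ a ∈ l, memE a) : piM l.prod = (l.map piM).prod := by
  induction l with
  | nil =>
    ext i j
    simp [piM, Matrix.one_apply]
  | cons a l ih =>
    rw [List.prod_cons, List.map_cons, List.prod_cons,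
      piM_mul (h a (by simp)),
      ih fun x hx => h x (by simp [hx])]

private lemma piL_sum {ι : Type*} (s : Finset ι)
    (f : ι → Matrix (Fin ℓ ⊕ Fin m) (Fin ℓ ⊕ Fin m) F) :
    piL (∑ i ∈ s, f i) = ∑ i ∈ s, piL (f i) := by
  ext i j
  simp [piL, Matrix.sum_apply]

private lemma piM_sum {ι : Type*} (s : Finset ι)
    (f : ι → Matrix (Fin ℓ ⊕ Fin m) (Fin ℓ ⊕ Fin m) F) :
    piM (∑ i ∈ s, f i) = ∑ i ∈ s, piM (f i) := by
  ext i j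
  simp [piM, Matrix.sum_apply]

private lemma piL_zsmul (z : ℤ) (M : Matrix (Fin ℓ ⊕ Fin m) (Fin ℓ ⊕ Fin m) F) :
    piL (z • M) = z • piL M := by
  ext i j
  simp [piL]

private lemma piM_zsmul (z : ℤ) (M : Matrix (Fin ℓ ⊕ Fin m) (Fin ℓ ⊕ Fin m) F) :
    piM (z • M) = z • piM M := by
  ext i j
  simp [piM]

private lemma piL_stdPoly (t : ℕ) (y : Fin t → Matrix (Fin ℓ ⊕ Fin m) (Fin ℓ ⊕ Fin m) F)
    (h : ∀ k, memE (y k)) :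
    piL (stdPoly t y) = stdPoly t (fun k => piL (y k)) := by
  unfold stdPoly
  rw [piL_sum]
  refine Finset.sum_congr rfl fun σ _ => ?_
  rw [piL_zsmul, piL_listProd, List.map_ofFn]
  · rfl
  · intro a ha
    rw [List.mem_ofFn] at ha
    obtain ⟨k, rfl⟩ := ha
    exact h _

private lemma piM_stdPoly (t : ℕ) (y : Fin t → Matrix (Fin ℓ ⊕ Fin m) (Fin ℓ ⊕ Fin m) F)
    (h : ∀ k, memE (y k)) :
    piM (stdPoly t y) = stdPoly t (fun k => piM (y k)) := by
  unfold stdPoly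
  rw [piM_sum]
  refine Finset.sum_congr rfl fun σ _ => ?_
  rw [piM_zsmul, piM_listProd, List.map_ofFn]
  · rfl
  · intro a ha
    rw [List.mem_ofFn] at ha
    obtain ⟨k, rfl⟩ := ha
    exact h _

end Aux

section Shuffle

variable {q r : ℕ}

private lemma card_compl_eq (S : Finset (Fin (q + r))) (hS : S.card = q) :
    Sᶜ.card = r := by
  simp [Finset.card_compl, hS]

/-- The monotone "shuffle" equivalence associated to a subset `S` of size `q`. -/
private def shufE (S : Finset (Fin (q + r))) (hS : S.card = q) :
    Fin q ⊕ Fin r ≃ Fin (q + r) :=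
  (Equiv.sumCongr (S.orderIsoOfFin hS).toEquiv
      ((Sᶜ.orderIsoOfFin (card_compl_eq S hS)).toEquiv.trans
        (Equiv.subtypeEquivRight fun x => Finset.mem_compl))).trans
    (Equiv.sumCompl (· ∈ S))

private lemma shufE_inl (S : Finset (Fin (q + r))) (hS : S.card = q) (i : Fin q) :
    shufE S hS (Sum.inl i) = ↑(S.orderIsoOfFin hS i) := rfl

private lemma shufE_inr (S : Finset (Fin (q + r))) (hS : S.card = q) (j : Fin r) :
    shufE S hS (Sum.inr j) = ↑(Sᶜ.orderIsoOfFin (card_compl_eq S hS) j) := rfl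

private def phiFun (S : Finset (Fin (q + r))) (hS : S.card = q)
    (a : Equiv.Perm (Fin q)) (b : Equiv.Perm (Fin r)) : Equiv.Perm (Fin (q + r)) :=
  finSumFinEquiv.symm.trans ((Equiv.Perm.sumCongr a b).trans (shufE S hS))

private lemma phiFun_apply_left (S : Finset (Fin (q + r))) (hS : S.card = q)
    (a : Equiv.Perm (Fin q)) (b : Equiv.Perm (Fin r)) (i : Fin q) :
    phiFun S hS a b (Fin.castAdd r i) = shufE S hS (Sum.inl (a i)) := by
  simp [phiFun, Equiv.trans_apply, finSumFinEquiv_symm_apply_castAdd]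

private lemma phiFun_apply_right (S : Finset (Fin (q + r))) (hS : S.card = q)
    (a : Equiv.Perm (Fin q)) (b : Equiv.Perm (Fin r)) (j : Fin r) :
    phiFun S hS a b (Fin.natAdd q j) = shufE S hS (Sum.inr (b j)) := by
  simp [phiFun, Equiv.trans_apply, finSumFinEquiv_symm_apply_natAdd]

private lemma phiFun_image (S : Finset (Fin (q + r))) (hS : S.card = q)
    (a : Equiv.Perm (Fin q)) (b : Equiv.Perm (Fin r)) :
    Finset.image (fun i : Fin q => phiFun S hS a b (Fin.castAdd r i)) Finset.univ = S := by
  ext z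
  simp only [Finset.mem_image, Finset.mem_univ, true_and, phiFun_apply_left, shufE_inl]
  constructor
  · rintro ⟨i, rfl⟩
    exact (S.orderIsoOfFin hS (a i)).2
  · intro hz
    refine ⟨a.symm ((S.orderIsoOfFin hS).symm ⟨z, hz⟩), ?_⟩
    simp

private lemma phiFun_injective :
    Function.Injective
      (fun p : {S : Finset (Fin (q + r)) // S.card = q} ×
          Equiv.Perm (Fin q) × Equiv.Perm (Fin r) =>
        phiFun p.1.1 p.1.2 p.2.1 p.2.2) := by
  rintro ⟨⟨S₁, hS₁⟩, a₁, b₁⟩ ⟨⟨S₂, hS₂⟩, a₂, b₂⟩ h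
  simp only at h
  obtain rfl : S₁ = S₂ := by
    rw [← phiFun_image S₁ hS₁ a₁ b₁, ← phiFun_image S₂ hS₂ a₂ b₂, h]
  have ha : a₁ = a₂ := by
    refine Equiv.ext fun i => ?_
    have h' := congrArg (fun σ : Equiv.Perm (Fin (q + r)) => σ (Fin.castAdd r i)) h
    simp only [phiFun_apply_left, shufE_inl] at h'
    exact (S₁.orderIsoOfFin hS₁).injective (Subtype.ext h')
  have hb : b₁ = b₂ := by
    refine Equiv.ext fun j => ?_
    have h' := congrArg (fun σ : Equiv.Perm (Fin (q + r)) => σ (Fin.natAdd q j)) h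
    simp only [phiFun_apply_right, shufE_inr] at h'
    exact (S₁ᶜ.orderIsoOfFin (card_compl_eq S₁ hS₁)).injective (Subtype.ext h')
  simp [ha, hb]

private lemma phiFun_bijective :
    Function.Bijective
      (fun p : {S : Finset (Fin (q + r)) // S.card = q} ×
          Equiv.Perm (Fin q) × Equiv.Perm (Fin r) =>
        phiFun p.1.1 p.1.2 p.2.1 p.2.2) := by
  rw [Fintype.bijective_iff_injective_and_card]
  refine ⟨phiFun_injective, ?_⟩
  have hcm := Nat.choose_mul_factorial_mul_factorial (Nat.le_add_right q r)
  rw [Nat.add_sub_cancel_left] at hcm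
  simp only [Fintype.card_prod, Fintype.card_perm, Fintype.card_finset_len,
    Fintype.card_fin]
  rw [← hcm]
  ring

private lemma sign_phiFun (S : Finset (Fin (q + r))) (hS : S.card = q)
    (a : Equiv.Perm (Fin q)) (b : Equiv.Perm (Fin r)) :
    Equiv.Perm.sign (phiFun S hS a b) =
      Equiv.Perm.sign (finSumFinEquiv.symm.trans (shufE S hS) : Equiv.Perm (Fin (q + r))) *
        (Equiv.Perm.sign a * Equiv.Perm.sign b) := by
  have hmul : phiFun S hS a b =
      (finSumFinEquiv.symm.trans (shufE S hS) : Equiv.Perm (Fin (q + r))) *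
        (Equiv.permCongr finSumFinEquiv (Equiv.Perm.sumCongr a b)) := by
    ext z
    simp [phiFun, Equiv.Perm.mul_apply, Equiv.permCongr_apply, Equiv.trans_apply]
  rw [hmul, _root_.map_mul Equiv.Perm.sign, Equiv.Perm.sign_permCongr, Equiv.Perm.sign_sumCongr]

end Shuffle

/-- If `A ⊆ E_{(ℓ,m)}(F)` is a subalgebra whose image `A_ℓ` satisfies `s_q` (`q ≤ 2ℓ`) and
whose image `A_m` satisfies `s_r` (`r ≤ 2m`), then `A` satisfies `s_{q+r}`. -/
theorem subalgebra_of_blockUT_satisfies_sum (F : Type*) [Field F] (ℓ m q r : ℕ)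
    (hℓ : 0 < ℓ) (hm : 0 < m) (hq : q ≤ 2 * ℓ) (hr : r ≤ 2 * m)
    (A : Subalgebra F (Matrix (Fin ℓ ⊕ Fin m) (Fin ℓ ⊕ Fin m) F))
    (hA : ∀ x ∈ A, memE x)
    (hAq : ∀ x : Fin q → Matrix (Fin ℓ ⊕ Fin m) (Fin ℓ ⊕ Fin m) F,
      (∀ k, x k ∈ A) → stdPoly q (fun k => piL (x k)) = 0)
    (hAr : ∀ x : Fin r → Matrix (Fin ℓ ⊕ Fin m) (Fin ℓ ⊕ Fin m) F,
      (∀ k, x k ∈ A) → stdPoly r (fun k => piM (x k)) = 0) :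
    ∀ x : Fin (q + r) → Matrix (Fin ℓ ⊕ Fin m) (Fin ℓ ⊕ Fin m) F,
      (∀ k, x k ∈ A) → stdPoly (q + r) x = 0 := by
  intro x hx
  classical
  -- `stdPoly` of tuples from `A` lies in `A`
  have hmemA : ∀ (t : ℕ) (y : Fin t → Matrix (Fin ℓ ⊕ Fin m) (Fin ℓ ⊕ Fin m) F),
      (∀ k, y k ∈ A) → stdPoly t y ∈ A := by
    intro t y hy
    unfold stdPoly
    refine Subalgebra.sum_mem A fun σ _ => ?_
    refine zsmul_mem ?_ _
    refine list_prod_mem fun z hz => ?_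
    rw [List.mem_ofFn] at hz
    obtain ⟨k, rfl⟩ := hz
    exact hy _
  -- the key vanishing for each subset S
  have key : ∀ (S : Finset (Fin (q + r))) (hS : S.card = q),
      stdPoly q (fun i => x (shufE S hS (Sum.inl i))) *
        stdPoly r (fun j => x (shufE S hS (Sum.inr j))) = 0 := by
    intro S hS
    set P := stdPoly q (fun i => x (shufE S hS (Sum.inl i))) with hPdef
    set Q := stdPoly r (fun j => x (shufE S hS (Sum.inr j))) with hQdef
    have hP : P ∈ A := hmemA _ _ fun i => hx _
    have hQ : Q ∈ A := hmemA _ _ fun j => hx _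
    have hPL : piL P = 0 := by
      rw [hPdef, piL_stdPoly _ _ fun i => hA _ (hx _)]
      exact hAq _ fun i => hx _
    have hQM : piM Q = 0 := by
      rw [hQdef, piM_stdPoly _ _ fun j => hA _ (hx _)]
      exact hAr _ fun j => hx _
    exact mul_eq_zero_blocks (hA _ hP) (hA _ hQ) hPL hQM
  -- reindex the sum over permutations via the shuffle decomposition
  rw [stdPoly,
    ← Fintype.sum_bijective _ phiFun_bijective
      (fun p : {S : Finset (Fin (q + r)) // S.card = q} ×
          Equiv.Perm (Fin q) × Equiv.Perm (Fin r) =>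
        ((Equiv.Perm.sign (phiFun p.1.1 p.1.2 p.2.1 p.2.2) : ℤˣ) : ℤ) •
          (List.ofFn fun i => x (phiFun p.1.1 p.1.2 p.2.1 p.2.2 i)).prod)
      _ (fun p => rfl)]
  rw [Fintype.sum_prod_type]
  refine Finset.sum_eq_zero fun S' _ => ?_
  obtain ⟨S, hS⟩ := S'
  -- compute each term
  have hterm : ∀ (a : Equiv.Perm (Fin q)) (b : Equiv.Perm (Fin r)),
      ((Equiv.Perm.sign (phiFun S hS a b) : ℤˣ) : ℤ) •
          (List.ofFn fun i => x (phiFun S hS a b i)).prod =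
        ((Equiv.Perm.sign
            (finSumFinEquiv.symm.trans (shufE S hS) : Equiv.Perm (Fin (q + r))) : ℤˣ) : ℤ) •
          ((((Equiv.Perm.sign a : ℤˣ) : ℤ) •
              (List.ofFn fun i => x (shufE S hS (Sum.inl (a i)))).prod) *
            (((Equiv.Perm.sign b : ℤˣ) : ℤ) •
              (List.ofFn fun j => x (shufE S hS (Sum.inr (b j)))).prod)) := by
    intro a b
    rw [List.ofFn_add (f := fun i => x (phiFun S hS a b i)), List.prod_append]
    simp only [show ∀ i : Fin q, Fin.castLE (Nat.le_add_right q r) i = Fin.castAdd r i from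
      fun _ => rfl, phiFun_apply_left, phiFun_apply_right]
    rw [sign_phiFun]
    simp only [Units.val_mul, Int.cast_id]
    rw [smul_mul_assoc, mul_smul_comm, smul_smul, smul_smul]
    ring_nf
  calc (∑ ab : Equiv.Perm (Fin q) × Equiv.Perm (Fin r),
        ((Equiv.Perm.sign (phiFun S hS ab.1 ab.2) : ℤˣ) : ℤ) •
          (List.ofFn fun i => x (phiFun S hS ab.1 ab.2 i)).prod)
      = ∑ ab : Equiv.Perm (Fin q) × Equiv.Perm (Fin r),
        ((Equiv.Perm.sign
            (finSumFinEquiv.symm.trans (shufE S hS) : Equiv.Perm (Fin (q + r))) : ℤˣ) : ℤ) •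
          ((((Equiv.Perm.sign ab.1 : ℤˣ) : ℤ) •
              (List.ofFn fun i => x (shufE S hS (Sum.inl (ab.1 i)))).prod) *
            (((Equiv.Perm.sign ab.2 : ℤˣ) : ℤ) •
              (List.ofFn fun j => x (shufE S hS (Sum.inr (ab.2 j)))).prod)) :=
        Finset.sum_congr rfl fun ab _ => hterm ab.1 ab.2
    _ = ((Equiv.Perm.sign
            (finSumFinEquiv.symm.trans (shufE S hS) : Equiv.Perm (Fin (q + r))) : ℤˣ) : ℤ) •
          ((stdPoly q fun i => x (shufE S hS (Sum.inl i))) *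
            (stdPoly r fun j => x (shufE S hS (Sum.inr j)))) := by
        rw [← Finset.smul_sum]
        congr 1
        rw [Fintype.sum_prod_type, stdPoly, stdPoly, Finset.sum_mul_sum]
    _ = 0 := by rw [key S hS, smul_zero]
end

section
/- Every F-algebra automorphism of M_n(F), for F a field, is inner: there exists an invertible matrix Q ∈ M_n(F) such that the automorphism sends a to Q a Q^{-1} for all a. -/
open Matrix

/-- Every `F`-algebra automorphism of `M_n(F)` is inner: it is conjugation by some
invertible matrix `Q`. -/
theorem matrix_algAut_inner (F : Type*) [Field F] (n : ℕ)
    (τ : Matrix (Fin n) (Fin n) F ≃ₐ[F] Matrix (Fin n) (Fin n) F) :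
    ∃ Q : (Matrix (Fin n) (Fin n) F)ˣ,
      ∀ a : Matrix (Fin n) (Fin n) F, τ a = (Q : Matrix (Fin n) (Fin n) F) * a * ((Q⁻¹ : (Matrix (Fin n) (Fin n) F)ˣ) : Matrix (Fin n) (Fin n) F) := by
  rcases Nat.eq_zero_or_pos n with hn | hn
  · subst hn
    exact ⟨1, fun a => Subsingleton.elim _ _⟩
  let i0 : Fin n := ⟨0, hn⟩
  -- the image of the rank-one idempotent E_{00}
  set p : Matrix (Fin n) (Fin n) F := τ (Matrix.single i0 i0 1) with hp
  have hpidem : p * p = p := by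
    rw [hp, ← _root_.map_mul]
    congr 1
    simp
  have hpne : p ≠ 0 := by
    rw [hp]
    intro h
    have := τ.injective (h.trans (map_zero τ).symm)
    apply one_ne_zero (α := F)
    have := congrFun (congrFun this i0) i0
    simpa using this
  -- choose a vector in the image of p
  obtain ⟨w, hw⟩ : ∃ w, p *ᵥ w ≠ 0 := by
    by_contra h
    push_neg at h
    apply hpne
    ext i j
    have := congrFun (h (Pi.single j 1)) i
    simpa using this
  set v : Fin n → F := p *ᵥ w with hv
  have hpv : p *ᵥ v = v := by
    rw [hv, mulVec_mulVec, hpidem]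
  -- the conjugating matrix
  set Q : Matrix (Fin n) (Fin n) F :=
    Matrix.of (fun i j => (τ (Matrix.single j i0 1) *ᵥ v) i) with hQ
  have hQapp : ∀ i j, Q i j = ∑ l, τ (Matrix.single j i0 1) i l * v l := by
    intro i j
    rw [hQ]
    simp [mulVec, dotProduct]
  -- expansion of a column-matrix in terms of basis matrices
  have hcol : ∀ (c : Fin n → F),
      (∑ k, c k • Matrix.single k i0 1 : Matrix (Fin n) (Fin n) F)
        = Matrix.of (fun x y => if y = i0 then c x else 0) := by
    intro c
    ext x y
    simp only [Matrix.sum_apply, Pi.smul_apply, smul_eq_mul, Matrix.single, of_apply]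
    by_cases hy : y = i0
    · subst hy
      rw [Finset.sum_eq_single x] <;> simp +contextual [eq_comm]
    · rw [if_neg hy]
      exact Finset.sum_eq_zero fun k _ => by
        simp [Matrix.single, show ¬ i0 = y from fun h => hy h.symm]
  -- key intertwining identity
  have key : ∀ a : Matrix (Fin n) (Fin n) F, τ a * Q = Q * a := by
    intro a
    ext i j
    have hmat : a * Matrix.single j i0 1 = ∑ k, a k j • Matrix.single k i0 1 := by
      rw [hcol]
      ext x y
      simp only [mul_apply, Matrix.single, of_apply, mul_ite, mul_one, mul_zero]
      by_cases hy : y = i0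
      · subst hy
        rw [Finset.sum_eq_single j] <;> simp +contextual [eq_comm]
      · rw [if_neg hy]
        exact Finset.sum_eq_zero fun k _ => by
          simp [Matrix.single, show ¬ i0 = y from fun h => hy h.symm]
    have e1 : (τ a * Q) i j = (τ (a * Matrix.single j i0 1) *ᵥ v) i := by
      rw [_root_.map_mul]
      simp only [mul_apply, hQapp, mulVec, dotProduct, Finset.mul_sum, Finset.sum_mul, mul_assoc]
      rw [Finset.sum_comm]
    have e2 : (Q * a) i j = (τ (∑ k, a k j • Matrix.single k i0 1) *ᵥ v) i := by
      rw [map_sum]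
      simp only [mul_apply, hQapp, mulVec, dotProduct, Matrix.sum_apply, Finset.sum_mul,
        Finset.mul_sum]
      rw [Finset.sum_comm]
      refine Finset.sum_congr rfl fun k _ => Finset.sum_congr rfl fun l _ => ?_
      rw [_root_.map_smul]
      simp only [Matrix.smul_apply, smul_eq_mul]
      ring
    rw [e1, e2, hmat]
  -- Q is invertible
  have hdet : IsUnit Q.det := by
    rw [isUnit_iff_ne_zero]
    intro hdet0
    obtain ⟨c, hc0, hc⟩ := (Matrix.exists_mulVec_eq_zero_iff (M := Q)).mpr hdet0
    have hQc : Q *ᵥ c = τ (∑ j, c j • Matrix.single j i0 1) *ᵥ v := by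
      ext i
      rw [map_sum]
      simp only [mulVec, dotProduct, hQapp, Matrix.sum_apply, Finset.sum_mul, Finset.mul_sum]
      rw [Finset.sum_comm]
      refine Finset.sum_congr rfl fun k _ => Finset.sum_congr rfl fun l _ => ?_
      rw [_root_.map_smul]
      simp only [Matrix.smul_apply, smul_eq_mul]
      ring
    obtain ⟨j0, hj0⟩ : ∃ j0, c j0 ≠ 0 := by
      by_contra h
      push_neg at h
      exact hc0 (funext h)
    -- multiply on the left by a suitable basis matrix to recover p *ᵥ v = 0
    have hx : Matrix.single i0 j0 ((c j0)⁻¹) * (∑ j, c j • Matrix.single j i0 1)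
        = Matrix.single i0 i0 1 := by
      rw [Finset.mul_sum]
      rw [Finset.sum_eq_single j0]
      · rw [mul_smul_comm, single_mul_single_same, smul_single]
        congr 1
        rw [smul_eq_mul]
        field_simp
      · intro b _ hb
        rw [mul_smul_comm, single_mul_single_of_ne (c := (c j0)⁻¹) (h := Ne.symm hb) (d := 1), smul_zero]
      · simp
    have hzero : p *ᵥ v = 0 := by
      have h3 := congrArg (fun m => τ m *ᵥ v) hx
      simp only [_root_.map_mul] at h3
      rw [← hp] at h3
      rw [← h3, ← mulVec_mulVec, ← hQc, hc, mulVec_zero]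
    rw [hpv] at hzero
    exact hw hzero
  have hinv : Invertible Q := Q.invertibleOfIsUnitDet hdet
  refine ⟨@unitOfInvertible _ _ Q hinv, fun a => ?_⟩
  have hu1 : ((@unitOfInvertible _ _ Q hinv : (Matrix (Fin n) (Fin n) F)ˣ)
      : Matrix (Fin n) (Fin n) F) = Q := rfl
  have h2 := Units.mul_inv (@unitOfInvertible _ _ Q hinv : (Matrix (Fin n) (Fin n) F)ˣ)
  calc τ a = τ a * (((@unitOfInvertible _ _ Q hinv : (Matrix (Fin n) (Fin n) F)ˣ)
        : Matrix (Fin n) (Fin n) F) * ↑(@unitOfInvertible _ _ Q hinv : (Matrix (Fin n) (Fin n) F)ˣ)⁻¹) := by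
        rw [h2, mul_one]
    _ = (τ a * Q) * ↑(@unitOfInvertible _ _ Q hinv : (Matrix (Fin n) (Fin n) F)ˣ)⁻¹ := by
        rw [hu1, mul_assoc]
    _ = Q * a * ↑(@unitOfInvertible _ _ Q hinv : (Matrix (Fin n) (Fin n) F)ˣ)⁻¹ := by rw [key]
end

section
/- Every proper F-subalgebra of the algebra U_n(F) of upper triangular n×n matrices over a field F satisfies the standard identity s_{2n-2}. -/
open Matrix

section Alt

variable (F : Type*) [CommRing F] (A : Type*) [Ring A] [Algebra F A]

/-- `stdPoly` as an alternating map. -/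
noncomputable def stdAlt (d : ℕ) : A [⋀^Fin d]→ₗ[F] A :=
  MultilinearMap.alternatization (MultilinearMap.mkPiAlgebraFin F d A)

theorem stdPoly_eq_stdAlt (d : ℕ) (x : Fin d → A) : stdPoly d x = stdAlt F A d x := by
  rw [stdAlt, MultilinearMap.alternatization_apply]
  refine Finset.sum_congr rfl fun σ _ => ?_
  rw [MultilinearMap.domDomCongr_apply, MultilinearMap.mkPiAlgebraFin_apply, Units.smul_def]

end Alt

section One

theorem prod_insertIdx_one {A : Type*} [Monoid A] :
    ∀ (p : ℕ) (L : List A), p ≤ L.length → (L.insertIdx p 1).prod = L.prod := by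
  intro p
  induction p with
  | zero => intro L _; rw [List.insertIdx_zero, List.prod_cons, one_mul]
  | succ p ih =>
    intro L hL
    cases L with
    | nil => simp at hL
    | cons a L' =>
      rw [List.insertIdx_succ_cons, List.prod_cons, List.prod_cons, ih L' (by simpa using hL)]

theorem sum_range_neg_one_pow_even (m : ℕ) : ∑ i ∈ Finset.range (2 * m), ((-1 : ℤ)) ^ i = 0 := by
  induction m with
  | zero => simp
  | succ m ih =>
    have : 2 * (m + 1) = (2 * m) + 1 + 1 := by ring
    rw [this, Finset.sum_range_succ, Finset.sum_range_succ, ih]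
    have : Odd (2 * m + 1) := ⟨m, by ring⟩
    rw [Even.neg_one_pow ⟨m, by ring⟩, this.neg_one_pow]
    ring

theorem stdPoly_head_one {A : Type*} [Ring A] {d : ℕ} (hd : Even (d + 1))
    (y : Fin (d + 1) → A) (hy : y 0 = 1) : stdPoly (d + 1) y = 0 := by
  classical
  set φ : Fin (d + 1) × Equiv.Perm (Fin d) → Equiv.Perm (Fin (d + 1)) :=
    fun pe => (Equiv.Perm.decomposeFin.symm (0, pe.2)) * (Fin.cycleRange pe.1) with hφ
  have hφ0 : ∀ pe, φ pe pe.1 = 0 := by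
    intro pe
    simp [hφ, Equiv.Perm.mul_apply, Fin.cycleRange_self]
  have hbij : Function.Bijective φ := by
    rw [Fintype.bijective_iff_injective_and_card]
    refine ⟨?_, by simp [Fintype.card_perm, Fintype.card_fin, Nat.factorial_succ]⟩
    rintro ⟨p, ρ⟩ ⟨p', ρ'⟩ h
    have hp : p = p' := by
      by_contra hne
      have h1 : φ (p', ρ') p = 0 := by rw [← h]; exact hφ0 (p, ρ)
      have h2 := hφ0 (p', ρ')
      exact hne ((Equiv.injective _) (h1.trans h2.symm))
    subst hp
    simp only [hφ] at h
    have h3 := mul_right_cancel h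
    have h4 := Equiv.Perm.decomposeFin.symm.injective h3
    simp only [Prod.mk.injEq] at h4
    exact Prod.ext rfl h4.2
  rw [stdPoly, ← Function.Bijective.sum_comp hbij
    (fun σ => ((Equiv.Perm.sign σ : ℤˣ) : ℤ) • (List.ofFn fun i => y (σ i)).prod)]
  have key : ∀ pe : Fin (d + 1) × Equiv.Perm (Fin d),
      ((Equiv.Perm.sign (φ pe) : ℤˣ) : ℤ) • (List.ofFn fun i => y (φ pe i)).prod
      = ((-1 : ℤ)) ^ ((pe.1 : ℕ)) •
        (((Equiv.Perm.sign pe.2 : ℤˣ) : ℤ) • (List.ofFn fun i : Fin d => y (pe.2 i).succ).prod) := by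
    rintro ⟨p, ρ⟩
    have hsign : ((Equiv.Perm.sign (φ (p, ρ)) : ℤˣ) : ℤ)
        = ((-1 : ℤ)) ^ ((p : ℕ)) * ((Equiv.Perm.sign ρ : ℤˣ) : ℤ) := by
      simp only [hφ, _root_.map_mul, Equiv.Perm.decomposeFin.symm_sign, if_pos rfl,
        Fin.sign_cycleRange, one_mul, Units.val_mul]
      push_cast
      ring
    have hlist : (List.ofFn fun i => y (φ (p, ρ) i))
        = (List.ofFn fun i : Fin d => y (ρ i).succ).insertIdx (p : ℕ) 1 := by
      apply List.ext_getElem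
      · rw [List.length_ofFn, List.length_insertIdx, if_pos (by simp [Fin.is_le]), List.length_ofFn]
      · intro i h1 h2
        rw [List.length_ofFn] at h1
        rw [List.getElem_ofFn]
        rcases lt_trichotomy i (p : ℕ) with hip | hip | hip
        · have hid : i < d := by have := p.isLt; omega
          rw [List.getElem_insertIdx_of_lt hip]
          rw [List.getElem_ofFn]
          have hcyc : Fin.cycleRange p ⟨i, h1⟩ = (⟨i, hid⟩ : Fin d).succ := by
            apply Fin.ext
            rw [Fin.coe_cycleRange_of_lt (by simpa [Fin.lt_def] using hip)]
            rfl
          simp only [hφ, Equiv.Perm.mul_apply, hcyc,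
            Equiv.Perm.decomposeFin_symm_apply_succ, Equiv.swap_self]
          rfl
        · subst hip
          rw [List.getElem_insertIdx_self]
          have : (⟨(p : ℕ), h1⟩ : Fin (d + 1)) = p := Fin.eta p p.isLt
          rw [this]
          exact (congrArg y (hφ0 (p, ρ))).trans hy
        · obtain ⟨k, hk⟩ : ∃ k, i = (p : ℕ) + k + 1 := ⟨i - p - 1, by omega⟩
          subst hk
          have hpk : (p : ℕ) + k < d := by omega
          rw [List.getElem_insertIdx_add_succ _ _ _ _ (by simpa using hpk)]
          rw [List.getElem_ofFn]
          have hcyc : Fin.cycleRange p ⟨(p : ℕ) + k + 1, h1⟩ = (⟨(p : ℕ) + k, hpk⟩ : Fin d).succ := by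
            rw [Fin.cycleRange_of_gt (by simp [Fin.lt_def])]
            apply Fin.ext; rfl
          simp only [hφ, Equiv.Perm.mul_apply, hcyc,
            Equiv.Perm.decomposeFin_symm_apply_succ, Equiv.swap_self]
          rfl
    rw [hsign, hlist, mul_smul]
    congr 1
    rw [prod_insertIdx_one _ _ (by simp [Fin.is_le])]
  rw [Finset.sum_congr rfl fun pe _ => key pe, Fintype.sum_prod_type]
  have : ∀ p : Fin (d + 1), ∑ ρ : Equiv.Perm (Fin d), ((-1 : ℤ)) ^ ((p : ℕ)) •
      (((Equiv.Perm.sign ρ : ℤˣ) : ℤ) • (List.ofFn fun i : Fin d => y (ρ i).succ).prod)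
      = ((-1 : ℤ)) ^ ((p : ℕ)) • ∑ ρ : Equiv.Perm (Fin d),
        (((Equiv.Perm.sign ρ : ℤˣ) : ℤ) • (List.ofFn fun i : Fin d => y (ρ i).succ).prod) := by
    intro p; rw [Finset.smul_sum]
  rw [Finset.sum_congr rfl fun p _ => this p, ← Finset.sum_smul]
  obtain ⟨m, hm⟩ := hd
  have hsum : ∑ p : Fin (d + 1), ((-1 : ℤ)) ^ ((p : ℕ)) = 0 := by
    rw [Fin.sum_univ_eq_sum_range (fun i => ((-1:ℤ))^i)]
    rw [show d + 1 = 2 * m by omega]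
    exact sum_range_neg_one_pow_even m
  rw [hsum, zero_smul]

theorem stdPoly_apply_one {A : Type*} [Ring A] {d : ℕ} (hd : Even d)
    (x : Fin d → A) (k : Fin d) (hk : x k = 1) : stdPoly d x = 0 := by
  cases d with
  | zero => exact k.elim0
  | succ e =>
    have halg : stdPoly (e + 1) x = stdAlt ℤ A (e + 1) x := stdPoly_eq_stdAlt ℤ A (e + 1) x
    set τ : Equiv.Perm (Fin (e + 1)) := Equiv.swap 0 k with hτ
    have hx : x = (x ∘ τ) ∘ τ := by
      funext t; simp [hτ, Function.comp, Equiv.swap_apply_self]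
    rw [halg, hx, AlternatingMap.map_perm (stdAlt ℤ A (e + 1)) (x ∘ τ) τ]
    have h0 : (x ∘ τ) 0 = 1 := by simp [hτ, Equiv.swap_apply_left, hk]
    rw [← stdPoly_eq_stdAlt, stdPoly_head_one hd (x ∘ τ) h0, smul_zero]


end One

section Paths

variable {F : Type*} [CommRing F] {n d : ℕ}

theorem listProd_entry : ∀ {d : ℕ} (y : Fin d → Matrix (Fin n) (Fin n) F) (p q : Fin n),
    (List.ofFn y).prod p q = ∑ c : Fin (d + 1) → Fin n,
      if c 0 = p ∧ c (Fin.last d) = q then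
        ∏ t : Fin d, y t (c t.castSucc) (c t.succ) else 0 := by
  intro d
  induction d with
  | zero =>
    intro y p q
    rw [show (List.ofFn y) = [] by simp, List.prod_nil]
    have key : ∀ c : Fin 1 → Fin n,
        (if c 0 = p ∧ c (Fin.last 0) = q then
          (∏ t : Fin 0, y t (c t.castSucc) (c t.succ)) else 0)
        = if c = (fun _ => p) then (if p = q then (1:F) else 0) else 0 := by
      intro c
      have hl : Fin.last 0 = (0 : Fin 1) := rfl
      by_cases h : c 0 = p
      · have hc : c = fun _ => p := funext fun i => by rw [Subsingleton.elim i 0, h]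
        rw [if_pos hc, hl]
        by_cases hq : p = q
        · rw [if_pos ⟨h, h.trans hq⟩, if_pos hq, Finset.prod_of_isEmpty]
        · rw [if_neg (by rintro ⟨h1, h2⟩; exact hq ((h1.symm.trans h2))), if_neg hq]
      · rw [if_neg (by rintro ⟨h1, _⟩; exact h h1), if_neg (by
          intro hc; exact h (by rw [hc]))]
    rw [Finset.sum_congr rfl fun c _ => key c, Finset.sum_ite_eq' Finset.univ
      ((fun _ => p) : Fin 1 → Fin n) (fun _ => if p = q then (1:F) else 0),
      if_pos (Finset.mem_univ _)]
    by_cases hpq : p = q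
    · subst hpq; rw [Matrix.one_apply_eq, if_pos rfl]
    · rw [Matrix.one_apply_ne' (fun h => hpq h.symm), if_neg hpq]
  | succ d ih =>
    intro y p q
    rw [List.ofFn_succ, List.prod_cons, Matrix.mul_apply]
    have hIH : ∀ m : Fin n, (List.ofFn fun i : Fin d => y i.succ).prod m q
        = ∑ c' : Fin (d + 1) → Fin n, if c' 0 = m ∧ c' (Fin.last d) = q then
            ∏ t : Fin d, y t.succ (c' t.castSucc) (c' t.succ) else 0 :=
      fun m => ih (fun i => y i.succ) m q
    simp_rw [hIH]
    rw [← (Fin.consEquiv (fun _ : Fin (d+2) => Fin n)).sum_comp]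
    rw [Fintype.sum_prod_type]
    -- simplify cons applications
    have hcons : ∀ (a : Fin n) (c' : Fin (d+1) → Fin n),
        (if (Fin.consEquiv fun _ => Fin n) (a, c') 0 = p ∧
            (Fin.consEquiv fun _ => Fin n) (a, c') (Fin.last (d+1)) = q then
          ∏ t : Fin (d+1), y t ((Fin.consEquiv fun _ => Fin n) (a, c') t.castSucc)
            ((Fin.consEquiv fun _ => Fin n) (a, c') t.succ) else 0)
        = if a = p then (if c' (Fin.last d) = q then
            y 0 a (c' 0) * ∏ t : Fin d, y t.succ (c' t.castSucc) (c' t.succ) else 0) else 0 := by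
      intro a c'
      have h1 : (Fin.consEquiv fun _ : Fin (d+2) => Fin n) (a, c') = Fin.cons a c' := rfl
      rw [h1]
      have h2 : Fin.cons (α := fun _ : Fin (d+2) => Fin n) a c' 0 = a := rfl
      have h3 : Fin.cons (α := fun _ : Fin (d+2) => Fin n) a c' (Fin.last (d+1)) =
          c' (Fin.last d) := by rw [← Fin.succ_last, Fin.cons_succ]
      have h4 : (∏ t : Fin (d+1), y t (Fin.cons (α := fun _ : Fin (d+2) => Fin n) a c' t.castSucc)
            (Fin.cons (α := fun _ : Fin (d+2) => Fin n) a c' t.succ))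
          = y 0 a (c' 0) * ∏ t : Fin d, y t.succ (c' t.castSucc) (c' t.succ) := by
        rw [Fin.prod_univ_succ]
        simp [Fin.cons_zero, Fin.cons_succ, ← Fin.succ_castSucc]
      rw [h2, h3, h4, ite_and]
    simp_rw [hcons]
    simp_rw [Finset.mul_sum, mul_ite, mul_zero]
    rw [Finset.sum_comm]
    conv_rhs => rw [Finset.sum_comm]
    refine Finset.sum_congr rfl fun c' _ => ?_
    by_cases hX : c' (Fin.last d) = q
    · simp only [hX, and_true, if_true]
      rw [Finset.sum_ite_eq Finset.univ (c' 0) (fun m => y 0 p m * ∏ t : Fin d, y t.succ (c' t.castSucc) (c' t.succ)), if_pos (Finset.mem_univ _)]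
      rw [Finset.sum_ite_eq' Finset.univ p (fun m => y 0 m (c' 0) * ∏ t : Fin d, y t.succ (c' t.castSucc) (c' t.succ)), if_pos (Finset.mem_univ _)]
    · simp [hX]

theorem stdPoly_entry (x : Fin d → Matrix (Fin n) (Fin n) F) (p q : Fin n) :
    stdPoly d x p q = ∑ c : Fin (d + 1) → Fin n,
      if c 0 = p ∧ c (Fin.last d) = q then
        (Matrix.of fun t k : Fin d => x k (c t.castSucc) (c t.succ)).det else 0 := by
  rw [stdPoly, Matrix.sum_apply]
  have h1 : ∀ σ : Equiv.Perm (Fin d),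
      (((Equiv.Perm.sign σ : ℤˣ) : ℤ) • (List.ofFn fun i => x (σ i)).prod) p q
      = ∑ c : Fin (d + 1) → Fin n,
        if c 0 = p ∧ c (Fin.last d) = q then
          ((Equiv.Perm.sign σ : ℤˣ) : ℤ) •
            ∏ t : Fin d, x (σ t) (c t.castSucc) (c t.succ) else 0 := by
    intro σ
    rw [Matrix.smul_apply, listProd_entry (fun i => x (σ i)) p q, Finset.smul_sum]
    refine Finset.sum_congr rfl fun c _ => ?_
    rw [smul_ite, smul_zero]
  rw [Finset.sum_congr rfl fun σ _ => h1 σ, Finset.sum_comm]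
  refine Finset.sum_congr rfl fun c _ => ?_
  by_cases hc : c 0 = p ∧ c (Fin.last d) = q
  · simp only [if_pos hc]
    rw [← Matrix.det_transpose]
    rw [Matrix.det_apply]
    refine Finset.sum_congr rfl fun σ _ => ?_
    rw [Units.smul_def]
    congr 1
  · simp [if_neg hc]


end Paths

section N2

theorem detN_zero {F : Type*} [CommRing F] {n : ℕ} (hn : 2 ≤ n)
    (x : Fin (2 * n - 2) → Matrix (Fin n) (Fin n) F)
    (hup : ∀ k, ∀ i j : Fin n, (j : ℕ) < (i : ℕ) → x k i j = 0)
    (k₀ : Fin (2 * n - 2)) (h2 : ∀ i j : Fin n, (j : ℕ) < (i : ℕ) + 2 → x k₀ i j = 0)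
    (c : Fin (2 * n - 2 + 1) → Fin n) :
    (Matrix.of fun t k : Fin (2 * n - 2) => x k (c t.castSucc) (c t.succ)).det = 0 := by
  by_cases hmono : ∀ t : Fin (2 * n - 2), (c t.castSucc : ℕ) ≤ (c t.succ : ℕ)
  · by_cases hdf : ∃ t t' : Fin (2 * n - 2), (t' : ℕ) = (t : ℕ) + 1 ∧
        c t.castSucc = c t.succ ∧ c t'.castSucc = c t'.succ
    · obtain ⟨t, t', ht', hf1, hf2⟩ := hdf
      apply Matrix.det_zero_of_row_eq (i := t) (j := t')
      · intro h; rw [h] at ht'; omega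
      · funext k
        have e1 : c t.succ = c t'.castSucc := by
          congr 1; apply Fin.ext; simp [ht']
        simp only [Matrix.of_apply]
        rw [hf1, ← hf2, ← e1]
    · by_cases hjump : ∃ t : Fin (2 * n - 2), (c t.castSucc : ℕ) + 2 ≤ (c t.succ : ℕ)
      · exfalso
        obtain ⟨t₀, ht₀⟩ := hjump
        set g : ℕ → ℤ := fun i => if h : i < (2 * n - 2) + 1 then ((c ⟨i, h⟩ : ℕ) : ℤ) else 0 with hgdef
        have hgv : ∀ (i : ℕ) (h : i < (2 * n - 2) + 1), g i = ((c ⟨i, h⟩ : ℕ) : ℤ) := fun i h => dif_pos h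
        have hcs : ∀ t : Fin (2 * n - 2), t.castSucc = (⟨(t : ℕ), by omega⟩ : Fin ((2 * n - 2)+1)) :=
          fun t => rfl
        have hsc : ∀ t : Fin (2 * n - 2), t.succ = (⟨(t : ℕ) + 1, by omega⟩ : Fin ((2 * n - 2)+1)) :=
          fun t => rfl
        have hg1 : ∀ t : Fin (2 * n - 2), g (t : ℕ) = ((c t.castSucc : ℕ) : ℤ) := by
          intro t; rw [hgv _ (by omega), hcs t]
        have hg2 : ∀ t : Fin (2 * n - 2), g ((t : ℕ) + 1) = ((c t.succ : ℕ) : ℤ) := by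
          intro t; rw [hgv _ (by omega), hsc t]
        have hgm : ∀ t : Fin (2 * n - 2), g (t : ℕ) ≤ g ((t : ℕ) + 1) := by
          intro t; rw [hg1, hg2]; exact_mod_cast hmono t
        set S : Finset ℕ := (Finset.range (2 * n - 2)).filter (fun i => g i < g (i + 1)) with hS
        -- the telescoping sum
        have htel : ∑ i ∈ Finset.range (2 * n - 2), (g (i + 1) - g i) = g (2 * n - 2) - g 0 :=
          Finset.sum_range_sub g (2 * n - 2)
        have hbound : ∀ i ∈ Finset.range (2 * n - 2),
            ((if i ∈ S then (1:ℤ) else 0) + (if i = (t₀ : ℕ) then (1:ℤ) else 0))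
              ≤ g (i + 1) - g i := by
          intro i hi
          rw [Finset.mem_range] at hi
          have hti : ∀ h : i < (2 * n - 2), g i ≤ g (i+1) := fun h => hgm ⟨i, h⟩
          by_cases he : i = (t₀ : ℕ)
          · have : g i + 2 ≤ g (i + 1) := by
              subst he
              have := hg1 t₀; have := hg2 t₀
              rw [hg1 t₀, hg2 t₀]; exact_mod_cast ht₀
            have hiS : i ∈ S := by
              rw [hS, Finset.mem_filter, Finset.mem_range]; exact ⟨hi, by omega⟩
            rw [if_pos hiS, if_pos he]; omega
          · rw [if_neg he]
            by_cases hiS : i ∈ S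
            · rw [if_pos hiS]
              rw [hS, Finset.mem_filter] at hiS
              omega
            · rw [if_neg hiS]
              have := hti hi; omega
        have hsum : (S.card : ℤ) + 1 ≤ g (2 * n - 2) - g 0 := by
          have h1 := Finset.sum_le_sum hbound
          rw [htel] at h1
          rw [Finset.sum_add_distrib] at h1
          have h2 : ∑ i ∈ Finset.range (2 * n - 2), (if i ∈ S then (1:ℤ) else 0) = S.card := by
            rw [Finset.sum_ite_mem]
            have : Finset.range (2 * n - 2) ∩ S = S := by
              apply Finset.inter_eq_right.mpr
              rw [hS]; exact Finset.filter_subset _ _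
            rw [this, Finset.sum_const, nsmul_eq_mul, mul_one]
          have h3 : ∑ i ∈ Finset.range (2 * n - 2), (if i = (t₀ : ℕ) then (1:ℤ) else 0) = 1 := by
            rw [Finset.sum_ite_eq' (Finset.range (2 * n - 2)) (t₀ : ℕ) (fun _ => (1:ℤ))]
            rw [if_pos (Finset.mem_range.mpr t₀.isLt)]
          rw [h2, h3] at h1; exact h1
        have hgd : g (2 * n - 2) ≤ (n : ℤ) - 1 := by
          rw [hgv (2 * n - 2) (by omega)]
          have : ((c ⟨(2 * n - 2), by omega⟩ : Fin n) : ℕ) < n := (c ⟨(2 * n - 2), by omega⟩).isLt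
          omega
        have hg0 : 0 ≤ g 0 := by rw [hgv 0 (by omega)]; positivity
        have hScard : (S.card : ℤ) ≤ (n : ℤ) - 2 := by omega
        -- flats
        set T : Finset ℕ := (Finset.range (2 * n - 2)).filter (fun i => ¬ g i < g (i + 1)) with hT
        have hST : S.card + T.card = (2 * n - 2) := by
          rw [hS, hT, Finset.card_filter_add_card_filter_not, Finset.card_range]
        have hTS : ∀ i ∈ T, i ≠ (2 * n - 2) - 1 → i + 1 ∈ S := by
          intro i hiT hne
          rw [hT, Finset.mem_filter, Finset.mem_range] at hiT
          obtain ⟨hid, hflat⟩ := hiT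
          have hi1 : i + 1 < (2 * n - 2) := by omega
          have hflat' : g i = g (i + 1) := le_antisymm (hgm ⟨i, hid⟩) (by omega)
          rw [hS, Finset.mem_filter, Finset.mem_range]
          refine ⟨hi1, ?_⟩
          rcases lt_or_eq_of_le (hgm ⟨i + 1, hi1⟩) with h | h
          · exact h
          · exfalso
            apply hdf
            refine ⟨⟨i, hid⟩, ⟨i + 1, hi1⟩, rfl, ?_, ?_⟩
            · apply Fin.ext
              have := hg1 (⟨i, hid⟩ : Fin (2 * n - 2)); have := hg2 (⟨i, hid⟩ : Fin (2 * n - 2))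
              have : ((c (⟨i, hid⟩ : Fin (2 * n - 2)).castSucc : ℕ) : ℤ)
                  = ((c (⟨i, hid⟩ : Fin (2 * n - 2)).succ : ℕ) : ℤ) := by
                rw [← hg1, ← hg2, hflat']
              exact_mod_cast this
            · apply Fin.ext
              have : ((c (⟨i + 1, hi1⟩ : Fin (2 * n - 2)).castSucc : ℕ) : ℤ)
                  = ((c (⟨i + 1, hi1⟩ : Fin (2 * n - 2)).succ : ℕ) : ℤ) := by
                rw [← hg1, ← hg2, h]
              exact_mod_cast this
        have hinj : T.card ≤ S.card + 1 := by
          have h1 : (T.erase ((2 * n - 2) - 1)).card ≤ S.card := by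
            apply Finset.card_le_card_of_injOn (fun i => i + 1)
            · intro i hi
              rw [Finset.mem_coe, Finset.mem_erase] at hi
              exact hTS i hi.2 hi.1
            · intro a _ b _ h; simpa using h
          have := Finset.card_erase_le (s := T) (a := (2 * n - 2) - 1)
          have h2 := Finset.pred_card_le_card_erase (s := T) (a := (2 * n - 2) - 1)
          omega
        omega
      · apply Matrix.det_eq_zero_of_column_eq_zero k₀
        intro t
        push_neg at hjump
        exact h2 _ _ (by have := hjump t; omega)
  · push_neg at hmono
    obtain ⟨t, ht⟩ := hmono
    apply Matrix.det_eq_zero_of_row_eq_zero t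
    intro k
    exact hup k _ _ (by omega)

/-- `s_{2n-2}` vanishes on upper triangular matrices if one argument is strictly upper
triangular of level 2. -/
theorem stdPoly_N2 {F : Type*} [CommRing F] {n : ℕ} (hn : 2 ≤ n)
    (x : Fin (2 * n - 2) → Matrix (Fin n) (Fin n) F)
    (hup : ∀ k, ∀ i j : Fin n, (j : ℕ) < (i : ℕ) → x k i j = 0)
    (k₀ : Fin (2 * n - 2)) (h2 : ∀ i j : Fin n, (j : ℕ) < (i : ℕ) + 2 → x k₀ i j = 0) :
    stdPoly (2 * n - 2) x = 0 := by
  ext p q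
  rw [stdPoly_entry, Matrix.zero_apply]
  refine Finset.sum_eq_zero fun c _ => ?_
  rw [detN_zero hn x hup k₀ h2 c]
  simp

end N2

section Step1

variable {F : Type*} [Field F] {n : ℕ}

def Jmod (F : Type*) [Field F] (n k : ℕ) : Submodule F (Matrix (Fin n) (Fin n) F) where
  carrier := {M | ∀ i j : Fin n, (j : ℕ) < (i : ℕ) + k → M i j = 0}
  add_mem' := by intro a b ha hb i j h; simp [ha i j h, hb i j h]
  zero_mem' := by intro i j h; simp
  smul_mem' := by intro c a ha i j h; simp [ha i j h]

theorem mem_Jmod {k : ℕ} {M : Matrix (Fin n) (Fin n) F} :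
    M ∈ Jmod F n k ↔ ∀ i j : Fin n, (j : ℕ) < (i : ℕ) + k → M i j = 0 := Iff.rfl

theorem Jmod_mul {a b : ℕ} {M N : Matrix (Fin n) (Fin n) F}
    (hM : M ∈ Jmod F n a) (hN : N ∈ Jmod F n b) : M * N ∈ Jmod F n (a + b) := by
  intro i j hj
  rw [Matrix.mul_apply]
  apply Finset.sum_eq_zero
  intro m _
  by_cases hm : (m : ℕ) < (i : ℕ) + a
  · rw [hM i m hm, zero_mul]
  · rw [hN m j (by omega), mul_zero]

theorem Jmod_anti {a b : ℕ} (h : a ≤ b) : Jmod F n b ≤ Jmod F n a := by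
  intro M hM i j hj; exact hM i j (by omega)

theorem stdBasis_mem_Jmod {i j : Fin n} {k : ℕ} (h : (i : ℕ) + k ≤ (j : ℕ)) :
    single i j (1 : F) ∈ Jmod F n k := by
  intro i' j' hij
  apply Matrix.single_apply_of_ne
  rintro ⟨rfl, rfl⟩
  omega

theorem step1 (hn : 2 ≤ n) (A : Subalgebra F (Matrix (Fin n) (Fin n) F))
    (hA : (A : Set (Matrix (Fin n) (Fin n) F)) ⊂
      {M : Matrix (Fin n) (Fin n) F | ∀ i j : Fin n, j < i → M i j = 0}) :
    ¬ (Jmod F n 0 ≤ Subalgebra.toSubmodule A ⊔ Jmod F n 2) := by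
  intro hle
  have key : ∀ m : ℕ, Jmod F n 0 ≤ Subalgebra.toSubmodule A ⊔ Jmod F n (2 + m) := by
    intro m
    induction m with
    | zero => exact hle
    | succ m ih =>
      have hstep : Jmod F n (2 + m) ≤ Subalgebra.toSubmodule A ⊔ Jmod F n (2 + (m + 1)) := by
        intro M hM
        rw [Matrix.matrix_eq_sum_single M]
        apply Submodule.sum_mem
        intro i _
        apply Submodule.sum_mem
        intro j _
        by_cases hij : (j : ℕ) < (i : ℕ) + (2 + m)
        · rw [hM i j hij, Matrix.single_zero]
          exact Submodule.zero_mem _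
        · push_neg at hij
          have hj1 : (i : ℕ) + 2 + m ≤ (j : ℕ) := by omega
          have hjpos : 1 ≤ (j : ℕ) := by omega
          set mid : Fin n := ⟨(j : ℕ) - 1, by omega⟩ with hmid
          have hEim : single i mid (1 : F) ∈ Jmod F n 0 := by
            apply stdBasis_mem_Jmod; simp [hmid]; omega
          have hEmj : single mid j (1 : F) ∈ Jmod F n 0 := by
            apply stdBasis_mem_Jmod; simp [hmid]
          obtain ⟨a, ha, v, hv, hav⟩ := Submodule.mem_sup.mp (ih hEim)
          obtain ⟨b, hb, w, hw, hbw⟩ := Submodule.mem_sup.mp (hle hEmj)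
          have ha' : a ∈ Jmod F n (1 + m) := by
            have : a = single i mid (1 : F) - v := eq_sub_of_add_eq hav
            rw [this]
            apply Submodule.sub_mem
            · apply stdBasis_mem_Jmod; simp [hmid]; omega
            · exact Jmod_anti (by omega) hv
          have hb' : b ∈ Jmod F n 1 := by
            have : b = single mid j (1 : F) - w := eq_sub_of_add_eq hbw
            rw [this]
            apply Submodule.sub_mem
            · apply stdBasis_mem_Jmod; simp [hmid]; omega
            · exact Jmod_anti (by omega) hw
          have hEij : single i j ((1 : F)) =
              single i mid (1 : F) * single mid j (1 : F) := by
            rw [Matrix.single_mul_single_same, one_mul]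
          have hmem : single i j ((1:F)) ∈
              Subalgebra.toSubmodule A ⊔ Jmod F n (2 + (m + 1)) := by
            rw [hEij, ← hav, ← hbw]
            have hexp : (a + v) * (b + w) = a * b + (a * w + (v * b + v * w)) := by
              rw [add_mul, mul_add, mul_add]; abel
            rw [hexp]
            apply Submodule.add_mem
            · refine Submodule.mem_sup_left ?_
              rw [Subalgebra.mem_toSubmodule] at ha hb ⊢
              exact mul_mem ha hb
            · apply Submodule.mem_sup_right
              refine Submodule.add_mem _ ?_ (Submodule.add_mem _ ?_ ?_)
              · exact Jmod_anti (by omega) (Jmod_mul ha' hw)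
              · exact Jmod_anti (by omega) (Jmod_mul hv hb')
              · exact Jmod_anti (by omega) (Jmod_mul hv hw)
          have : single i j (M i j) = M i j • single i j (1 : F) := by
            rw [Matrix.smul_single, smul_eq_mul, mul_one]
          rw [this]
          exact Submodule.smul_mem _ _ hmem
      intro M hM
      obtain ⟨a, ha, v, hv, hav⟩ := Submodule.mem_sup.mp (ih hM)
      obtain ⟨a', ha', v', hv', hav'⟩ := Submodule.mem_sup.mp (hstep hv)
      rw [← hav, ← hav']
      rw [show a + (a' + v') = (a + a') + v' by abel]
      exact Submodule.add_mem _ (Submodule.mem_sup_left (Submodule.add_mem _ ha ha'))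
        (Submodule.mem_sup_right hv')
  have hJn : Jmod F n n ≤ Subalgebra.toSubmodule A := by
    intro M hM
    have : M = 0 := by
      ext i j
      exact hM i j (by have := j.isLt; omega)
    rw [this]; exact Submodule.zero_mem _
  have hfin : Jmod F n 0 ≤ Subalgebra.toSubmodule A := by
    have h1 := key (n - 2)
    rw [show 2 + (n - 2) = n by omega] at h1
    intro M hM
    obtain ⟨a, ha, v, hv, hav⟩ := Submodule.mem_sup.mp (h1 hM)
    rw [← hav]
    exact Submodule.add_mem _ ha (hJn hv)
  apply hA.2
  intro M hM
  apply hfin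
  intro i j hij
  exact hM i j (by rw [Fin.lt_def]; omega)

end Step1

section Tri

variable {F : Type*} [Field F] {n : ℕ}

def TriMod (F : Type*) [Field F] (n : ℕ) : Submodule F (Matrix (Fin n) (Fin n) F) where
  carrier := {M | ∀ i j : Fin n, ((j : ℕ) < (i : ℕ) ∨ (i : ℕ) + 1 < (j : ℕ)) → M i j = 0}
  add_mem' := by intro a b ha hb i j h; simp [ha i j h, hb i j h]
  zero_mem' := by intro i j h; simp
  smul_mem' := by intro c a ha i j h; simp [ha i j h]

theorem finrank_TriMod_le (hn : 2 ≤ n) : Module.finrank F (TriMod F n) ≤ 2 * n - 1 := by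
  have hφadd : ∀ (M N : TriMod F n), True := fun _ _ => trivial
  let φ : TriMod F n →ₗ[F] (Fin n → F) × (Fin (n - 1) → F) :=
    { toFun := fun M => (fun i => (M : Matrix (Fin n) (Fin n) F) i i,
        fun c => (M : Matrix (Fin n) (Fin n) F) ⟨(c : ℕ), by omega⟩ ⟨(c : ℕ) + 1, by omega⟩),
      map_add' := by intro M N; ext i <;> simp
      map_smul' := by intro r M; ext i <;> simp }
  have hinj : Function.Injective φ := by
    intro M N h
    have h1 : ∀ i : Fin n, (M : Matrix (Fin n) (Fin n) F) i i
        = (N : Matrix (Fin n) (Fin n) F) i i := fun i => congrFun (congrArg Prod.fst h) i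
    have h2 : ∀ c : Fin (n - 1), (M : Matrix (Fin n) (Fin n) F) ⟨(c : ℕ), by omega⟩ ⟨(c : ℕ) + 1, by omega⟩
        = (N : Matrix (Fin n) (Fin n) F) ⟨(c : ℕ), by omega⟩ ⟨(c : ℕ) + 1, by omega⟩ :=
      fun c => congrFun (congrArg Prod.snd h) c
    apply Subtype.ext
    ext i j
    rcases lt_trichotomy (j : ℕ) (i : ℕ) with hij | hij | hij
    · rw [M.2 i j (Or.inl hij), N.2 i j (Or.inl hij)]
    · have : j = i := Fin.ext hij
      subst this; exact h1 j
    · rcases Nat.lt_or_ge ((i : ℕ) + 1) (j : ℕ) with hij2 | hij2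
      · rw [M.2 i j (Or.inr hij2), N.2 i j (Or.inr hij2)]
      · have hji : (j : ℕ) = (i : ℕ) + 1 := by omega
        have hi : (i : ℕ) < n - 1 := by have := j.isLt; omega
        have := h2 ⟨(i : ℕ), hi⟩
        simpa [Fin.ext_iff, ← hji, Fin.eta] using this
  have hle := LinearMap.finrank_le_finrank_of_injective hinj
  rw [Module.finrank_prod, Module.finrank_pi, Module.finrank_pi] at hle
  simp only [Fintype.card_fin] at hle
  omega

end Tri

/-- Every proper `F`-subalgebra of the upper triangular matrices `U_n(F)` satisfies the
standard identity `s_{2n-2}`. -/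
theorem proper_subalgebra_of_triangular_satisfies (F : Type*) [Field F] (n : ℕ) (hn : 2 ≤ n)
    (A : Subalgebra F (Matrix (Fin n) (Fin n) F))
    (hA : (A : Set (Matrix (Fin n) (Fin n) F)) ⊂
      {M : Matrix (Fin n) (Fin n) F | ∀ i j : Fin n, j < i → M i j = 0}) :
    ∀ x : Fin (2 * n - 2) → Matrix (Fin n) (Fin n) F,
      (∀ k, x k ∈ A) → stdPoly (2 * n - 2) x = 0 := by
  classical
  intro x hx
  have hAU : ∀ M ∈ A, ∀ i j : Fin n, (j : ℕ) < (i : ℕ) → M i j = 0 := by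
    intro M hM i j hij
    exact hA.1 hM i j (by rwa [Fin.lt_def])
  have hmain := step1 hn A hA
  set J2 := Jmod F n 2 with hJ2
  set π := J2.mkQ with hπ
  -- A is inside the upper triangular matrices, as submodules
  have hAle : Subalgebra.toSubmodule A ≤ Jmod F n 0 := by
    intro M hM i j hij
    exact hAU M hM i j (by omega)
  -- truncation to tridiagonal
  have htrunc : ∀ M ∈ Jmod F n 0, ∃ T ∈ TriMod F n, M - T ∈ J2 := by
    intro M hM
    refine ⟨Matrix.of fun i j => if (i : ℕ) ≤ (j : ℕ) ∧ (j : ℕ) ≤ (i : ℕ) + 1 then M i j else 0,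
      ?_, ?_⟩
    · intro i j hij
      simp only [Matrix.of_apply]
      rw [if_neg (by omega)]
    · intro i j hij
      simp only [Matrix.sub_apply, Matrix.of_apply]
      by_cases h : (i : ℕ) ≤ (j : ℕ) ∧ (j : ℕ) ≤ (i : ℕ) + 1
      · rw [if_pos h, sub_self]
      · rw [if_neg h, hM i j (by omega), sub_zero]
  have hmapU : Submodule.map π (Jmod F n 0) ≤ Submodule.map π (TriMod F n) := by
    rintro q ⟨M, hM, rfl⟩
    obtain ⟨T, hT, hMT⟩ := htrunc M hM
    refine ⟨T, hT, ?_⟩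
    rw [hπ, Submodule.mkQ_apply, Submodule.mkQ_apply]
    exact ((Submodule.Quotient.eq J2).mpr hMT).symm
  have hrank1 : Module.finrank F (Submodule.map π (Jmod F n 0)) ≤ 2 * n - 1 :=
    le_trans (Submodule.finrank_mono hmapU)
      (le_trans (Submodule.finrank_map_le π (TriMod F n)) (finrank_TriMod_le hn))
  set W := Submodule.map π (Subalgebra.toSubmodule A) with hW
  have hWle : W ≤ Submodule.map π (Jmod F n 0) := Submodule.map_mono hAle
  have hWlt : W < Submodule.map π (Jmod F n 0) := by
    rcases lt_or_eq_of_le hWle with h | h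
    · exact h
    · exfalso
      apply hmain
      intro M hM
      have : π M ∈ W := by rw [h]; exact ⟨M, hM, rfl⟩
      obtain ⟨a, ha, haM⟩ := this
      have hsub : M - a ∈ J2 := by
        rw [hπ, Submodule.mkQ_apply, Submodule.mkQ_apply] at haM
        simpa using J2.neg_mem ((Submodule.Quotient.eq J2).mp haM)
      have : M = a + (M - a) := by abel
      rw [this]
      exact Submodule.add_mem _ (Submodule.mem_sup_left ha) (Submodule.mem_sup_right hsub)
  have hrankW : Module.finrank F W ≤ 2 * n - 2 := by
    have := Submodule.finrank_lt_finrank_of_lt hWlt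
    omega
  -- the family (1, x 0, ..., x (2n-3)) is dependent mod J2
  set X : Option (Fin (2 * n - 2)) → Matrix (Fin n) (Fin n) F := fun o => o.elim 1 x with hX
  have hXW : ∀ o, π (X o) ∈ W := by
    rintro (_ | k)
    · exact ⟨1, show (1 : Matrix (Fin n) (Fin n) F) ∈ A from A.one_mem, rfl⟩
    · exact ⟨x k, hx k, rfl⟩
  have hdep : ¬ LinearIndependent F (fun o => π (X o)) := by
    intro hind
    have h1 := finrank_span_eq_card hind
    have h2 : Submodule.span F (Set.range fun o => π (X o)) ≤ W :=
      Submodule.span_le.mpr (by rintro q ⟨o, rfl⟩; exact hXW o)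
    have h3 := Submodule.finrank_mono h2
    rw [h1] at h3
    simp only [Fintype.card_option, Fintype.card_fin] at h3
    omega
  obtain ⟨g, hgsum, o₀, hg0⟩ := Fintype.not_linearIndependent_iff.mp hdep
  set z : Matrix (Fin n) (Fin n) F := ∑ o, g o • X o with hz
  have hzJ2 : z ∈ J2 := by
    have hπz : π z = 0 := by
      rw [hz, map_sum]
      simpa only [_root_.map_smul] using hgsum
    rwa [hπ, Submodule.mkQ_apply, Submodule.Quotient.mk_eq_zero] at hπz
  have hzU : ∀ i j : Fin n, (j : ℕ) < (i : ℕ) → z i j = 0 := fun i j hij =>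
    hzJ2 i j (by omega)
  have hzsplit : z = g none • 1 + ∑ k : Fin (2 * n - 2), g (some k) • x k := by
    rw [hz, Fintype.sum_option]; rfl
  by_cases hsome : ∃ k : Fin (2 * n - 2), g (some k) ≠ 0
  · obtain ⟨k, hk⟩ := hsome
    have hsplit2 : ∑ k' : Fin (2 * n - 2), g (some k') • x k'
        = g (some k) • x k + ∑ j ∈ Finset.univ.erase k, g (some j) • x j :=
      (Finset.add_sum_erase _ _ (Finset.mem_univ k)).symm
    have hxk : x k = (g (some k))⁻¹ •
        (z - g none • (1 : Matrix (Fin n) (Fin n) F)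
          - ∑ j ∈ Finset.univ.erase k, g (some j) • x j) := by
      have h4 : g (some k) • x k = z - g none • (1 : Matrix (Fin n) (Fin n) F)
          - ∑ j ∈ Finset.univ.erase k, g (some j) • x j := by
        rw [hzsplit, hsplit2]; abel
      rw [← h4, smul_smul, inv_mul_cancel₀ hk, one_smul]
    set f := stdAlt F (Matrix (Fin n) (Fin n) F) (2 * n - 2) with hf
    have hupd : x = Function.update x k (x k) := (Function.update_eq_self k x).symm
    rw [stdPoly_eq_stdAlt F (Matrix (Fin n) (Fin n) F), ← hf, hupd, hxk]
    rw [f.map_update_smul, f.map_update_sub, f.map_update_sub]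
    have hz0 : f (Function.update x k z) = 0 := by
      rw [hf, ← stdPoly_eq_stdAlt]
      refine stdPoly_N2 hn _ ?_ k ?_
      · intro k' i j hij
        by_cases hk' : k' = k
        · subst hk'; rw [Function.update_self]; exact hzU i j hij
        · rw [Function.update_of_ne hk']; exact hAU _ (hx k') i j hij
      · intro i j hij
        rw [Function.update_self]; exact hzJ2 i j hij
    have hone : f (Function.update x k (1 : Matrix (Fin n) (Fin n) F)) = 0 := by
      rw [hf, ← stdPoly_eq_stdAlt]
      exact stdPoly_apply_one ⟨n - 1, by omega⟩ _ k (Function.update_self _ _ _)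
    have hone' : f (Function.update x k (g none • (1 : Matrix (Fin n) (Fin n) F))) = 0 := by
      rw [f.map_update_smul, hone, smul_zero]
    have hsum0 : f (Function.update x k
        (∑ j ∈ Finset.univ.erase k, g (some j) • x j)) = 0 := by
      rw [AlternatingMap.map_update_sum]
      apply Finset.sum_eq_zero
      intro j hj
      have hjk : j ≠ k := (Finset.mem_erase.mp hj).1
      rw [f.map_update_smul, f.map_update_self _ (Ne.symm hjk), smul_zero]
    rw [hz0, hone', hsum0, sub_zero, sub_zero, smul_zero]
  · push_neg at hsome
    exfalso
    have hnone : g none ≠ 0 := by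
      cases o₀ with
      | none => exact hg0
      | some k => exact absurd (hsome k) hg0
    have hz1 : z = g none • 1 := by
      rw [hzsplit, Finset.sum_eq_zero (fun k _ => by rw [hsome k, zero_smul]), add_zero]
    have h1 : (1 : Matrix (Fin n) (Fin n) F) ∈ J2 := by
      have := hzJ2; rw [hz1] at this
      exact (Submodule.smul_mem_iff _ hnone).mp this
    have h2 := h1 ⟨0, by omega⟩ ⟨0, by omega⟩ (by simp)
    rw [Matrix.one_apply_eq] at h2
    exact one_ne_zero h2
end

section
/- Let C be a commutative ring with a nonzero proper ideal I, and let B be the C-subalgebra of U_n(C) consisting of upper triangular matrices whose (1,2)-entry lies in I. Then B is a proper subalgebra of U_n(C) and s_{2n-2} is not an identity for B. -/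
open Matrix

lemma prod_break {R : Type*} [Semiring R] {ι : Type*} [DecidableEq ι] [Fintype ι]
    {α : Type*} (r s : α → ι) (c : α → R) :
    ∀ l : List α, ¬ l.IsChain (fun a b => s a = r b) →
      (l.map fun a => Matrix.single (r a) (s a) (c a)).prod = 0
  | [] => fun h => absurd List.isChain_nil h
  | [a] => fun h => absurd (List.isChain_singleton a) h
  | a :: b :: t => fun h => by
    rw [List.isChain_cons_cons] at h
    by_cases hab : s a = r b
    · have ht : ¬ (b :: t).IsChain (fun a b => s a = r b) := fun h' => h ⟨hab, h'⟩
      rw [List.map_cons, List.prod_cons, prod_break r s c (b :: t) ht, mul_zero]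
    · rw [List.map_cons, List.map_cons, List.prod_cons, List.prod_cons, ← mul_assoc,
        Matrix.single_mul_single_of_ne (h := hab), zero_mul]

lemma prod_chain {R : Type*} [Semiring R] {ι : Type*} [DecidableEq ι] [Fintype ι]
    {α : Type*} (r s : α → ι) (c : α → R) :
    ∀ (a : α) (l : List α), (a :: l).IsChain (fun a b => s a = r b) →
      ((a :: l).map fun a => Matrix.single (r a) (s a) (c a)).prod =
        Matrix.single (r a) (s ((a :: l).getLast (List.cons_ne_nil a l)))
          (((a :: l).map c).prod)
  | a, [] => fun _ => by simp
  | a, b :: t => fun h => by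
    rw [List.isChain_cons_cons] at h
    have ih := prod_chain r s c b t h.2
    rw [List.map_cons, List.prod_cons, ih, List.getLast_cons (List.cons_ne_nil b t), h.1,
      Matrix.single_mul_single_same]
    simp

lemma prod_chain' {R : Type*} [Semiring R] {ι : Type*} [DecidableEq ι] [Fintype ι]
    {α : Type*} (r s : α → ι) (c : α → R) (l : List α) (hne : l ≠ [])
    (h : l.IsChain (fun a b => s a = r b)) :
    (l.map fun a => Matrix.single (r a) (s a) (c a)).prod =
      Matrix.single (r (l.head hne)) (s (l.getLast hne)) ((l.map c).prod) := by
  cases l with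
  | nil => exact absurd rfl hne
  | cons a t => exact prod_chain r s c a t h

/-- Over a commutative ring `C` with a nonzero proper ideal `I`, the subalgebra `B` of
upper triangular matrices whose `(1,2)` entry lies in `I` is a proper subalgebra of
`U_n(C)` for which `s_{2n-2}` is not an identity. -/
theorem ideal_subalgebra_not_satisfying (C : Type*) [CommRing C] (n : ℕ) (hn : 2 ≤ n)
    (I : Ideal C) (hI0 : I ≠ ⊥) (hI1 : I ≠ ⊤) :
    ({M : Matrix (Fin n) (Fin n) C |
        (∀ i j : Fin n, j < i → M i j = 0) ∧ M ⟨0, by omega⟩ ⟨1, by omega⟩ ∈ I} ⊂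
      {M : Matrix (Fin n) (Fin n) C | ∀ i j : Fin n, j < i → M i j = 0}) ∧
    ∃ x : Fin (2 * n - 2) → Matrix (Fin n) (Fin n) C,
      (∀ k, (∀ i j : Fin n, j < i → x k i j = 0) ∧ x k ⟨0, by omega⟩ ⟨1, by omega⟩ ∈ I) ∧
      stdPoly (2 * n - 2) x ≠ 0 := by
  obtain ⟨c, hcI, hc0⟩ := (Submodule.ne_bot_iff I).mp hI0
  constructor
  · rw [Set.ssubset_iff_of_subset (fun M hM => hM.1)]
    refine ⟨Matrix.single ⟨0, by omega⟩ ⟨1, by omega⟩ (1 : C), fun i j hji => ?_,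
      fun hmem => ?_⟩
    · apply Matrix.single_apply_of_ne
      rintro ⟨rfl, rfl⟩
      simp [Fin.lt_def] at hji
    · have h1 : (1 : C) ∈ I := by
        have h2 := hmem.2
        rwa [Matrix.single_apply_same] at h2
      exact hI1 ((Ideal.eq_top_iff_one I).mpr h1)
  · let rF : Fin (2*n-2) → Fin n := fun m => ⟨(m : ℕ) / 2, by have := m.isLt; omega⟩
    let sF : Fin (2*n-2) → Fin n := fun m => ⟨((m : ℕ) + 1) / 2, by have := m.isLt; omega⟩
    let cf : Fin (2*n-2) → C := fun m => if (m : ℕ) = 1 then c else 1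
    refine ⟨fun m => Matrix.single (rF m) (sF m) (cf m), fun k => ⟨fun i j hji => ?_, ?_⟩, ?_⟩
    · apply Matrix.single_apply_of_ne
      rintro ⟨rfl, rfl⟩
      have hji' : ((k : ℕ) + 1) / 2 < (k : ℕ) / 2 := hji
      omega
    · show Matrix.single (rF k) (sF k) (cf k) ⟨0, by omega⟩ ⟨1, by omega⟩ ∈ I
      rcases eq_or_ne ((k : ℕ)) 1 with hk1 | hk1
      · have h1 : rF k = ⟨0, by omega⟩ := Fin.ext (show (k : ℕ)/2 = 0 by omega)
        have h2 : sF k = ⟨1, by omega⟩ := Fin.ext (show ((k : ℕ)+1)/2 = 1 by omega)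
        have h3 : cf k = c := by simp [cf, hk1]
        rw [h1, h2, h3, Matrix.single_apply_same]
        exact hcI
      · rw [Matrix.single_apply_of_ne]
        · exact I.zero_mem
        · rintro ⟨h1, h2⟩
          have e1 : (k : ℕ)/2 = 0 := congrArg Fin.val h1
          have e2 : ((k : ℕ)+1)/2 = 1 := congrArg Fin.val h2
          omega
    · have hP : (((List.ofFn (fun i : Fin (2*n-2) => i)).map cf).prod) = c := by
        rw [List.map_ofFn, List.prod_ofFn]
        rw [Finset.prod_eq_single (⟨1, by omega⟩ : Fin (2*n-2))]
        · simp [cf]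
        · intro b _ hb
          have hb1 : (b : ℕ) ≠ 1 := fun h => hb (Fin.ext h)
          simp [cf, hb1]
        · intro h
          exact absurd (Finset.mem_univ _) h
      have key : stdPoly (2*n-2) (fun m => Matrix.single (rF m) (sF m) (cf m))
          ⟨0, by omega⟩ ⟨n-1, by omega⟩ = c := by
        unfold stdPoly
        rw [Matrix.sum_apply]
        rw [Finset.sum_eq_single (1 : Equiv.Perm (Fin (2*n-2)))]
        · simp only [Equiv.Perm.sign_one, Units.val_one, one_smul]
          have hlist : (List.ofFn fun i => (fun m => Matrix.single (rF m) (sF m) (cf m))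
                ((1 : Equiv.Perm (Fin (2*n-2))) i)) =
              (List.ofFn (fun i : Fin (2*n-2) => i)).map
                (fun m => Matrix.single (rF m) (sF m) (cf m)) := by
            rw [List.map_ofFn]; rfl
          have hne1 : (List.ofFn (fun i : Fin (2*n-2) => i)) ≠ [] := by
            simp only [ne_eq, List.ofFn_eq_nil_iff]
            omega
          have hch1 : (List.ofFn (fun i : Fin (2*n-2) => i)).IsChain (fun a b => sF a = rF b) :=
            List.isChain_ofFn.mpr (fun i hi => Fin.ext rfl)
          rw [hlist, prod_chain' rF sF cf _ hne1 hch1, List.head_ofFn, List.getLast_ofFn, hP]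
          have hA : rF ⟨0, by omega⟩ = (⟨0, by omega⟩ : Fin n) :=
            Fin.ext (show (0:ℕ)/2 = 0 by omega)
          have hB : sF ⟨2*n-2-1, by omega⟩ = (⟨n-1, by omega⟩ : Fin n) :=
            Fin.ext (show (2*n-2-1+1)/2 = n-1 by omega)
          rw [hA, hB]
          exact Matrix.single_apply_same _ _ _
        · intro σ _ hσ
          have hlist : (List.ofFn fun i => (fun m => Matrix.single (rF m) (sF m) (cf m))
                (σ i)) =
              (List.ofFn σ).map (fun m => Matrix.single (rF m) (sF m) (cf m)) := by
            rw [List.map_ofFn]; rfl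
          rw [hlist]
          by_cases hch : (List.ofFn σ).IsChain (fun a b => sF a = rF b)
          · have hne1 : (List.ofFn σ) ≠ [] := by
              simp only [ne_eq, List.ofFn_eq_nil_iff]
              omega
            rw [prod_chain' rF sF cf _ hne1 hch, List.head_ofFn, List.getLast_ofFn]
            by_cases h0 : rF (σ ⟨0, by omega⟩) = (⟨0, by omega⟩ : Fin n)
            · exfalso
              apply hσ
              have hC := List.isChain_ofFn.mp hch
              let g : ℕ → ℕ := fun i => if h : i < 2*n-2 then ((σ ⟨i, h⟩ : Fin (2*n-2)) : ℕ) else 0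
              have hgdef : ∀ i (h : i < 2*n-2), g i = ((σ ⟨i, h⟩ : Fin (2*n-2)) : ℕ) :=
                fun i h => dif_pos h
              have hglt : ∀ i, i < 2*n-2 → g i < 2*n-2 := fun i h => by
                rw [hgdef i h]; exact (σ _).isLt
              have hginj : ∀ i j (hi : i < 2*n-2) (hj : j < 2*n-2), g i = g j → i = j := by
                intro i j hi hj hij
                rw [hgdef i hi, hgdef j hj] at hij
                have h2 := σ.injective (Fin.ext hij)
                simpa using congrArg Fin.val h2
              have hgsurj : ∀ v, v < 2*n-2 → ∃ j, j < 2*n-2 ∧ g j = v := by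
                intro v hv
                refine ⟨(σ.symm ⟨v, hv⟩ : ℕ), (σ.symm ⟨v, hv⟩).isLt, ?_⟩
                rw [hgdef _ (σ.symm ⟨v, hv⟩).isLt]
                exact congrArg Fin.val (σ.apply_symm_apply ⟨v, hv⟩)
              have hchain : ∀ i, i + 1 < 2*n-2 → (g i + 1)/2 = g (i+1)/2 := by
                intro i hi
                rw [hgdef i (by omega), hgdef (i+1) hi]
                exact congrArg Fin.val (hC i hi)
              have hg0 : g 0 < 2 := by
                have h2 : (g 0)/2 = 0 := by
                  rw [hgdef 0 (by omega)]
                  exact congrArg Fin.val h0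
                omega
              have key : ∀ k, k < 2*n-2 → g k = k := by
                intro k
                induction k using Nat.strong_induction_on with
                | _ k ih =>
                  intro hk
                  rcases Nat.eq_zero_or_pos k with rfl | hpos
                  · by_contra hne
                    obtain ⟨j, hj, hgj⟩ := hgsurj 0 (by omega)
                    have hj0 : j ≠ 0 := fun h => by rw [h] at hgj; exact hne hgj
                    have hc1 := hchain (j-1) (by omega)
                    rw [show j - 1 + 1 = j from by omega, hgj] at hc1
                    have hz : g (j-1) = 0 := by omega
                    have hfalse := hginj (j-1) j (by omega) hj (by rw [hz, hgj])
                    omega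
                  · have hk' : k - 1 < 2*n-2 := by omega
                    have hgk1 : g (k-1) = k-1 := ih (k-1) (by omega) hk'
                    have hc1 := hchain (k-1) (by omega)
                    rw [show k - 1 + 1 = k from by omega, hgk1] at hc1
                    have hglt1 := hglt k hk
                    have hne_k : g k ≠ k - 1 := fun h => by
                      have h2 := hginj k (k-1) hk hk' (by rw [h, hgk1])
                      omega
                    by_cases hv : g k = k
                    · exact hv
                    · exfalso
                      have hv2 : g k = k + 1 := by omega
                      obtain ⟨j, hj, hgj⟩ := hgsurj k hk
                      have hjge : k + 1 ≤ j := by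
                        rcases Nat.lt_or_ge j k with h1 | h1
                        · have h2 := ih j (by omega) (by omega)
                          omega
                        · rcases Nat.eq_or_lt_of_le h1 with h2 | h2
                          · rw [← h2] at hgj
                            omega
                          · omega
                      have hc2 := hchain (j-1) (by omega)
                      rw [show j - 1 + 1 = j from by omega, hgj] at hc2
                      have hw : g (j-1) = k - 1 ∨ g (j-1) = k := by omega
                      rcases hw with hw | hw
                      · have h2 := hginj (j-1) (k-1) (by omega) hk' (by rw [hw, hgk1])
                        omega
                      · have h2 := hginj (j-1) j (by omega) hj (by rw [hw, hgj])
                        omega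
              exact Equiv.ext fun m => Fin.ext ((hgdef m.val m.isLt).symm.trans (key m.val m.isLt))
            · rw [Matrix.smul_apply,
                Matrix.single_apply_of_ne _ _ _ _ _ (fun hand => h0 hand.1), smul_zero]
          · rw [prod_break rF sF cf _ hch]
            simp
        · intro h
          exact absurd (Finset.mem_univ _) h
      intro hzero
      rw [hzero] at key
      simp only [Matrix.zero_apply] at key
      exact hc0 key.symm
end
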